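/- arXiv:1603.08244 — 2 statements merged into one kernel-verified Lean document; each statement's English description precedes it below -/
import Mathlib

section
/- (Lemma 3.) For every DMC W, every ID rate R ≥ 0, and all positive constants λ₁, λ₂, ε, κ satisfying λ₁ + λ₂ < κ < 1, there exists η₀ ∈ ℕ such that for every blocklength n ≥ η₀ and every finite set ℳ with |ℳ| = ⌈exp(exp(nR))⌉, if {(Q_m, 𝒟_m)}_{m∈ℳ} is an (n, ℳ, λ₁, λ₂) ID code for W, then (1/|ℳ|) Σ_{m∈ℳ} Q_m({𝐱 ∈ 𝒳ⁿ : I(P_𝐱, W) > R − ε}) > 1 − κ − exp(e^{n(R − ε/2)}) / exp(e^{nR}). -/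
open scoped Classical
open Finset

noncomputable section

/-- `P` is a probability mass function on the finite type `X`. -/
def IsPMF {X : Type*} [Fintype X] (P : X → ℝ) : Prop :=
  (∀ x, 0 ≤ P x) ∧ ∑ x, P x = 1

/-- `W` is a (discrete memoryless) channel from `X` to `Y`. -/
def IsChannel {X Y : Type*} [Fintype Y] (W : X → Y → ℝ) : Prop :=
  (∀ x y, 0 ≤ W x y) ∧ ∀ x, ∑ y, W x y = 1

/-- The `n`-fold memoryless extension `W^n(𝐲|𝐱) = ∏ᵢ W(yᵢ|xᵢ)`. -/
def Wn {X Y : Type*} (W : X → Y → ℝ) (n : ℕ) (x : Fin n → X) (y : Fin n → Y) : ℝ :=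
  ∏ i, W (x i) (y i)

/-- Mutual information `I(P,W)` (natural logarithm), with the convention that
terms with `P x * W x y = 0` contribute `0`. -/
def mutInf {X Y : Type*} [Fintype X] [Fintype Y] (P : X → ℝ) (W : X → Y → ℝ) : ℝ :=
  ∑ x, ∑ y, if P x * W x y = 0 then 0
    else P x * W x y * Real.log (W x y / ∑ x', P x' * W x' y)

/-- The error requirements of an `(n, M, l1, l2)` ID code for the DMC `W`:
maximum probability of missed identification at most `l1`, maximum probability
of wrong identification at most `l2`. -/
def IDCodeErr {X Y M : Type*} [Fintype X] [Fintype Y]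
    (n : ℕ) (W : X → Y → ℝ) (Q : M → (Fin n → X) → ℝ)
    (D : M → Finset (Fin n → Y)) (l1 l2 : ℝ) : Prop :=
  (∀ m, ∑ x, Q m x * ∑ y ∈ (D m)ᶜ, Wn W n x y ≤ l1) ∧
  (∀ m m', m ≠ m' → ∑ x, Q m x * ∑ y ∈ D m', Wn W n x y ≤ l2)

/-- `(n, M, l1, l2)` ID code for the DMC `W`. -/
def IsIDCode {X Y M : Type*} [Fintype X] [Fintype Y]
    (n : ℕ) (W : X → Y → ℝ) (Q : M → (Fin n → X) → ℝ)
    (D : M → Finset (Fin n → Y)) (l1 l2 : ℝ) : Prop :=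
  (∀ m, IsPMF (Q m)) ∧ IDCodeErr n W Q D l1 l2

/-- Empirical type `P_𝐱` of a sequence `𝐱 ∈ Xⁿ`. -/
def empType {X : Type*} [Fintype X] (n : ℕ) (x : Fin n → X) : X → ℝ :=
  fun a => ((Finset.univ.filter (fun i => x i = a)).card : ℝ) / n

/-- `P` is an `n`-type on `X`: a PMF all of whose values are of the form `k/n`. -/
def IsNType {X : Type*} [Fintype X] (n : ℕ) (P : X → ℝ) : Prop :=
  IsPMF P ∧ ∀ a, ∃ k : ℕ, P a = (k : ℝ) / n

/-- The type class `T_P^{(n)}` of all sequences of empirical type `P`. -/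
def typeClass {X : Type*} [Fintype X] (n : ℕ) (P : X → ℝ) : Finset (Fin n → X) :=
  Finset.univ.filter (fun x => empType n x = P)

section Prelim

variable {X Y : Type} [Fintype X] [Fintype Y]

/-- product-sum exchange over a pi type -/
lemma sum_pi_prod {I K : Type} [DecidableEq I] [Fintype I] [Fintype K] (f : I → K → ℝ) :
    ∑ c : I → K, ∏ i, f i (c i) = ∏ i, ∑ b, f i b := by
  classical
  rw [Finset.prod_univ_sum]
  rw [Fintype.piFinset_univ]

lemma Wn_nonneg (W : X → Y → ℝ) (hW : IsChannel W) {n : ℕ} (x : Fin n → X) (y : Fin n → Y) :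
    0 ≤ Wn W n x y :=
  Finset.prod_nonneg fun i _ => hW.1 _ _

lemma sum_Wn (W : X → Y → ℝ) (hW : IsChannel W) {n : ℕ} (x : Fin n → X) :
    ∑ y, Wn W n x y = 1 := by
  unfold Wn
  rw [sum_pi_prod (fun i b => W (x i) b)]
  simp [hW.2]

lemma sum_Wn_subset_le_one (W : X → Y → ℝ) (hW : IsChannel W) {n : ℕ} (x : Fin n → X)
    (D : Finset (Fin n → Y)) : ∑ y ∈ D, Wn W n x y ≤ 1 := by
  rw [← sum_Wn W hW x]
  exact Finset.sum_le_sum_of_subset_of_nonneg (Finset.subset_univ D)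
    (fun y _ _ => Wn_nonneg W hW x y)

lemma sum_Wn_subset_nonneg (W : X → Y → ℝ) (hW : IsChannel W) {n : ℕ} (x : Fin n → X)
    (D : Finset (Fin n → Y)) : 0 ≤ ∑ y ∈ D, Wn W n x y :=
  Finset.sum_nonneg fun y _ => Wn_nonneg W hW x y

lemma W_le_one (W : X → Y → ℝ) (hW : IsChannel W) (a : X) (b : Y) : W a b ≤ 1 := by
  calc W a b ≤ ∑ b', W a b' :=
        Finset.single_le_sum (fun b' _ => hW.1 a b') (Finset.mem_univ b)
    _ = 1 := hW.2 a

lemma empType_nonneg {n : ℕ} (x : Fin n → X) (a : X) : 0 ≤ empType n x a := by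
  unfold empType; positivity

lemma empType_isPMF {n : ℕ} (hn : 0 < n) (x : Fin n → X) : IsPMF (empType n x) := by
  refine ⟨empType_nonneg x, ?_⟩
  unfold empType
  rw [← Finset.sum_div]
  rw [← Nat.cast_sum]
  rw [← Finset.card_eq_sum_card_fiberwise (fun i _ => Finset.mem_univ (x i))]
  simp
  exact_mod_cast hn.ne'

/-- the count of a symbol appearing in x is at least 1/n -/
lemma empType_apply_self_ge {n : ℕ} (hn : 0 < n) (x : Fin n → X) (i : Fin n) :
    1 / (n : ℝ) ≤ empType n x (x i) := by
  unfold empType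
  have h1 : (1 : ℕ) ≤ (Finset.univ.filter (fun j => x j = x i)).card := by
    rw [Nat.one_le_iff_ne_zero, ← Nat.pos_iff_ne_zero, Finset.card_pos]
    exact ⟨i, by simp⟩
  have h2 : (1:ℝ) ≤ ((Finset.univ.filter (fun j => x j = x i)).card : ℝ) := by exact_mod_cast h1
  have hn' : (0:ℝ) < n := by exact_mod_cast hn
  exact div_le_div_of_nonneg_right h2 hn'.le |>.trans_eq rfl

lemma PW_nonneg (W : X → Y → ℝ) (hW : IsChannel W) {P : X → ℝ} (hP : ∀ a, 0 ≤ P a) (b : Y) :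
    0 ≤ ∑ a, P a * W a b :=
  Finset.sum_nonneg fun a _ => mul_nonneg (hP a) (hW.1 a b)

lemma PW_le_one (W : X → Y → ℝ) (hW : IsChannel W) {P : X → ℝ} (hP : IsPMF P) (b : Y) :
    ∑ a, P a * W a b ≤ 1 := by
  calc ∑ a, P a * W a b ≤ ∑ a, P a * 1 :=
        Finset.sum_le_sum fun a _ => mul_le_mul_of_nonneg_left (W_le_one W hW a b) (hP.1 a)
    _ = 1 := by simp [hP.2]

lemma sum_PW (W : X → Y → ℝ) (hW : IsChannel W) {P : X → ℝ} (hP : IsPMF P) :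
    ∑ b, ∑ a, P a * W a b = 1 := by
  rw [Finset.sum_comm]
  simp_rw [← Finset.mul_sum, hW.2]
  simpa using hP.2

lemma mutInf_nonneg (W : X → Y → ℝ) (hW : IsChannel W) {P : X → ℝ} (hP : IsPMF P) :
    0 ≤ mutInf P W := by
  unfold mutInf
  have key : ∀ a b, P a * W a b - (if P a * W a b = 0 then 0 else P a * (∑ x', P x' * W x' b))
      ≤ (if P a * W a b = 0 then 0
        else P a * W a b * Real.log (W a b / ∑ x', P x' * W x' b)) := by
    intro a b
    by_cases h : P a * W a b = 0
    · simp [h]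
    · simp only [if_neg h]
      have hp : 0 < P a * W a b := lt_of_le_of_ne (mul_nonneg (hP.1 a) (hW.1 a b)) (Ne.symm h)
      have hPa : 0 < P a := lt_of_le_of_ne (hP.1 a) (by rintro e; exact h (by rw [← e]; ring))
      have hWab : 0 < W a b :=
        lt_of_le_of_ne (hW.1 a b) (by rintro e; exact h (by rw [← e]; ring))
      have hPW : 0 < ∑ x', P x' * W x' b :=
        lt_of_lt_of_le hp (Finset.single_le_sum
          (fun x' _ => mul_nonneg (hP.1 x') (hW.1 x' b)) (Finset.mem_univ a))
      have hlog : 1 - (∑ x', P x' * W x' b) / W a b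
          ≤ Real.log (W a b / ∑ x', P x' * W x' b) := by
        have h1 := Real.log_le_sub_one_of_pos (div_pos hPW hWab)
        have h2 : Real.log ((∑ x', P x' * W x' b) / W a b)
            = - Real.log (W a b / ∑ x', P x' * W x' b) := by
          rw [← Real.log_inv, inv_div]
        linarith
      calc P a * W a b - P a * (∑ x', P x' * W x' b)
          = P a * W a b * (1 - (∑ x', P x' * W x' b) / W a b) := by
            field_simp
        _ ≤ P a * W a b * Real.log (W a b / ∑ x', P x' * W x' b) :=
            mul_le_mul_of_nonneg_left hlog hp.le
  have h2 : ∀ a b, (if P a * W a b = 0 then 0 else P a * (∑ x', P x' * W x' b))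
      ≤ P a * (∑ x', P x' * W x' b) := by
    intro a b
    by_cases h : P a * W a b = 0
    · simp only [if_pos h]
      exact mul_nonneg (hP.1 a) (PW_nonneg W hW hP.1 b)
    · rw [if_neg h]
  have hsum1 : ∑ a, ∑ b, P a * W a b = 1 := by
    simp_rw [← Finset.mul_sum, hW.2]; simpa using hP.2
  have hsum2 : ∑ a, ∑ b, P a * (∑ x', P x' * W x' b) = 1 := by
    have hb : ∀ a : X, ∑ b, P a * (∑ x', P x' * W x' b) = P a := by
      intro a
      rw [← Finset.mul_sum, sum_PW W hW hP, mul_one]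
    simp_rw [hb]
    exact hP.2
  have h1 : (0:ℝ) ≤ ∑ a, ∑ b, (P a * W a b
      - (if P a * W a b = 0 then 0 else P a * (∑ x', P x' * W x' b))) := by
    have : ∑ a, ∑ b, (P a * W a b
        - (if P a * W a b = 0 then 0 else P a * (∑ x', P x' * W x' b)))
        ≥ ∑ a, ∑ b, (P a * W a b - P a * (∑ x', P x' * W x' b)) :=
      Finset.sum_le_sum fun a _ => Finset.sum_le_sum fun b _ => by
        have := h2 a b; linarith
    have heq : ∑ a, ∑ b, (P a * W a b - P a * (∑ x', P x' * W x' b)) = 0 := by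
      simp_rw [Finset.sum_sub_distrib]
      rw [hsum1, hsum2]; ring
    linarith
  calc (0:ℝ) ≤ _ := h1
    _ ≤ _ := Finset.sum_le_sum fun a _ => Finset.sum_le_sum fun b _ => key a b

end Prelim

section Chunk2

variable {X Y : Type} [Fintype X] [Fintype Y]

/-- minimum positive entry of the channel matrix (or 1) -/
def wm [Nonempty X] [Nonempty Y] (W : X → Y → ℝ) : ℝ :=
  (Finset.univ ×ˢ Finset.univ : Finset (X × Y)).inf'
    (Finset.univ_nonempty.product Finset.univ_nonempty)
    (fun p => if 0 < W p.1 p.2 then W p.1 p.2 else 1)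

variable [Nonempty X] [Nonempty Y]

lemma wm_pos (W : X → Y → ℝ) (hW : IsChannel W) : 0 < wm W := by
  rw [wm, Finset.lt_inf'_iff]
  intro p _
  by_cases h : 0 < W p.1 p.2 <;> simp [h]

lemma wm_le_one (W : X → Y → ℝ) (hW : IsChannel W) : wm W ≤ 1 := by
  obtain ⟨a⟩ := ‹Nonempty X›; obtain ⟨b⟩ := ‹Nonempty Y›
  have hm : ((a, b) : X × Y) ∈ (Finset.univ ×ˢ Finset.univ : Finset (X × Y)) := by simp
  refine le_trans (Finset.inf'_le _ hm) ?_
  by_cases h : 0 < W a b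
  · simpa [h] using W_le_one W hW a b
  · simp [h]

lemma wm_le (W : X → Y → ℝ) (hW : IsChannel W) {a : X} {b : Y} (h : W a b ≠ 0) :
    wm W ≤ W a b := by
  have hpos : 0 < W a b := lt_of_le_of_ne (hW.1 a b) (Ne.symm h)
  have hm : ((a, b) : X × Y) ∈ (Finset.univ ×ˢ Finset.univ : Finset (X × Y)) := by simp
  refine le_trans (Finset.inf'_le _ hm) ?_
  simp [hpos]

/-- log-ratio bound -/
def Bn (W : X → Y → ℝ) (n : ℕ) : ℝ := Real.log n - Real.log (wm W)

lemma Bn_nonneg (W : X → Y → ℝ) (hW : IsChannel W) {n : ℕ} (hn : 0 < n) : 0 ≤ Bn W n := by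
  have h1 : (0:ℝ) ≤ Real.log n := Real.log_nonneg (by exact_mod_cast hn)
  have h2 : Real.log (wm W) ≤ 0 := Real.log_nonpos (wm_pos W hW).le (wm_le_one W hW)
  unfold Bn; linarith

/-- product output distribution for type P -/
def nuP (W : X → Y → ℝ) {n : ℕ} (P : X → ℝ) (y : Fin n → Y) : ℝ :=
  ∏ i, ∑ a, P a * W a (y i)

/-- set of empirical types -/
def Tset (X : Type) [Fintype X] (n : ℕ) : Finset (X → ℝ) :=
  Finset.univ.image (empType (X := X) n)

/-- sum of all type product-output distributions -/
def nustar (W : X → Y → ℝ) (n : ℕ) (y : Fin n → Y) : ℝ :=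
  ∑ P ∈ Tset X n, nuP W P y

lemma nuP_nonneg (W : X → Y → ℝ) (hW : IsChannel W) {n : ℕ} {P : X → ℝ} (hP : ∀ a, 0 ≤ P a)
    (y : Fin n → Y) : 0 ≤ nuP W P y :=
  Finset.prod_nonneg fun i _ => PW_nonneg W hW hP _

lemma sum_nuP (W : X → Y → ℝ) (hW : IsChannel W) {n : ℕ} {P : X → ℝ} (hP : IsPMF P) :
    ∑ y : Fin n → Y, nuP W P y = 1 := by
  unfold nuP
  rw [sum_pi_prod (fun i b => ∑ a, P a * W a b)]
  rw [Finset.prod_congr rfl (fun i _ => sum_PW W hW hP)]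
  simp

lemma mem_Tset {n : ℕ} (x : Fin n → X) : empType n x ∈ Tset X n :=
  Finset.mem_image_of_mem _ (Finset.mem_univ x)

lemma nuP_le_nustar (W : X → Y → ℝ) (hW : IsChannel W) {n : ℕ} (x : Fin n → X)
    (y : Fin n → Y) : nuP W (empType n x) y ≤ nustar W n y := by
  apply Finset.single_le_sum (f := fun P => nuP W P y) ?_ (mem_Tset x)
  intro P hP
  obtain ⟨x', _, rfl⟩ := Finset.mem_image.1 hP
  exact nuP_nonneg W hW (empType_nonneg x') y

lemma nustar_nonneg (W : X → Y → ℝ) (hW : IsChannel W) {n : ℕ} (y : Fin n → Y) :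
    0 ≤ nustar W n y := by
  apply Finset.sum_nonneg
  intro P hP
  obtain ⟨x', _, rfl⟩ := Finset.mem_image.1 hP
  exact nuP_nonneg W hW (empType_nonneg x') y

lemma sum_nustar (W : X → Y → ℝ) (hW : IsChannel W) {n : ℕ} (hn : 0 < n) :
    ∑ y : Fin n → Y, nustar W n y = (Tset X n).card := by
  unfold nustar
  rw [Finset.sum_comm]
  have h : ∀ P ∈ Tset X n, ∑ y : Fin n → Y, nuP W P y = 1 := by
    intro P hP
    obtain ⟨x', _, rfl⟩ := Finset.mem_image.1 hP
    exact sum_nuP W hW (empType_isPMF hn x')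
  rw [Finset.sum_congr rfl h]
  simp

lemma card_Tset_le {n : ℕ} (hn : 0 < n) :
    ((Tset X n).card : ℝ) ≤ ((n : ℝ) + 1) ^ (Fintype.card X) := by
  have key : (Tset X n).card ≤ Fintype.card (X → Fin (n+1)) := by
    apply Finset.card_le_card_of_injOn
      (fun P => fun a => (⟨min n ⌊P a * (n:ℝ)⌋₊, lt_of_le_of_lt (min_le_left _ _) (Nat.lt_succ_self n)⟩ : Fin (n+1)))
      (fun P _ => Finset.mem_univ _)
    intro P hP P' hP' heq
    obtain ⟨x, _, rfl⟩ := Finset.mem_image.1 hP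
    obtain ⟨x', _, rfl⟩ := Finset.mem_image.1 hP'
    have hval : ∀ (z : Fin n → X) (a : X),
        min n ⌊empType n z a * (n:ℝ)⌋₊ = (Finset.univ.filter (fun i => z i = a)).card := by
      intro z a
      have hcard : ((Finset.univ.filter (fun i => z i = a)).card : ℝ) = empType n z a * (n:ℝ) := by
        unfold empType
        field_simp
      have : ⌊empType n z a * (n:ℝ)⌋₊ = (Finset.univ.filter (fun i => z i = a)).card := by
        rw [← hcard, Nat.floor_natCast]
      rw [this]
      exact min_eq_right (le_trans (Finset.card_le_card (Finset.filter_subset _ _)) (by simp))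
    funext a
    have h2 : min n ⌊empType n x a * (n:ℝ)⌋₊ = min n ⌊empType n x' a * (n:ℝ)⌋₊ := by
      have h1 := congrFun heq a
      simpa [Fin.mk.injEq] using h1
    rw [hval x a, hval x' a] at h2
    unfold empType
    rw [h2]
  calc ((Tset X n).card : ℝ) ≤ (Fintype.card (X → Fin (n+1)) : ℝ) := by exact_mod_cast key
    _ = ((n : ℝ) + 1) ^ (Fintype.card X) := by
        rw [Fintype.card_fun]
        push_cast
        simp

/-- second moment identity for sums of independent mean-zero coordinate functions -/
lemma sum_prod_sq {I K : Type} [DecidableEq I] [Fintype I] [Fintype K]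
    (q u : I → K → ℝ) (hq1 : ∀ i, ∑ b, q i b = 1) (hu : ∀ i, ∑ b, q i b * u i b = 0) :
    ∑ c : I → K, (∏ i, q i (c i)) * (∑ i, u i (c i))^2 = ∑ i, ∑ b, q i b * (u i b)^2 := by
  have E2 : ∀ i j : I, (∑ c : I → K, (∏ k, q k (c k)) * (u i (c i) * u j (c j)))
      = if i = j then ∑ b, q i b * (u i b)^2 else 0 := by
    intro i j
    have claim1 : ∀ c : I → K, (∏ k, q k (c k)) * (u i (c i) * u j (c j))
        = ∏ k, (q k (c k) * ((if k = i then u i (c k) else 1) * (if k = j then u j (c k) else 1))) := by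
      intro c
      rw [Finset.prod_mul_distrib, Finset.prod_mul_distrib]
      congr 1
      rw [Finset.prod_ite_eq' Finset.univ i (fun k => u i (c k)),
          Finset.prod_ite_eq' Finset.univ j (fun k => u j (c k))]
      simp
    rw [Finset.sum_congr rfl (fun c _ => claim1 c),
        sum_pi_prod (fun k b => q k b * ((if k = i then u i b else 1) * (if k = j then u j b else 1)))]
    by_cases hij : i = j
    · subst hij
      rw [if_pos rfl]
      have hfac : ∀ k, (∑ b, q k b * ((if k = i then u i b else 1) * (if k = i then u i b else 1)))
          = if k = i then ∑ b, q i b * (u i b)^2 else 1 := by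
        intro k
        by_cases hk : k = i
        · subst hk; simp [sq]
        · simp [hk, hq1 k]
      rw [Finset.prod_congr rfl (fun k _ => hfac k)]
      rw [Finset.prod_ite_eq' Finset.univ i (fun _ => ∑ b, q i b * (u i b)^2)]
      simp
    · rw [if_neg hij]
      apply Finset.prod_eq_zero (Finset.mem_univ i)
      simp only [if_pos rfl, if_neg hij]
      simpa using hu i
  have expand : ∀ c : I → K, (∑ i, u i (c i))^2 = ∑ i, ∑ j, u i (c i) * u j (c j) := by
    intro c
    rw [sq, Finset.sum_mul_sum]
  calc ∑ c : I → K, (∏ i, q i (c i)) * (∑ i, u i (c i))^2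
      = ∑ c : I → K, ∑ i, ∑ j, (∏ k, q k (c k)) * (u i (c i) * u j (c j)) := by
        apply Finset.sum_congr rfl
        intro c _
        rw [expand c, Finset.mul_sum]
        apply Finset.sum_congr rfl
        intro i _
        rw [Finset.mul_sum]
    _ = ∑ i, ∑ j, ∑ c : I → K, (∏ k, q k (c k)) * (u i (c i) * u j (c j)) := by
        rw [Finset.sum_comm]
        apply Finset.sum_congr rfl
        intro i _
        rw [Finset.sum_comm]
    _ = ∑ i, ∑ j, if i = j then ∑ b, q i b * (u i b)^2 else 0 := by
        apply Finset.sum_congr rfl; intro i _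
        apply Finset.sum_congr rfl; intro j _
        exact E2 i j
    _ = ∑ i, ∑ b, q i b * (u i b)^2 := by
        apply Finset.sum_congr rfl; intro i _
        simp

end Chunk2
section Chunk3

variable {X Y : Type} [Fintype X] [Fintype Y] [Nonempty X] [Nonempty Y]

lemma cheb (W : X → Y → ℝ) (hW : IsChannel W) {n : ℕ} (hn : 0 < n) (x : Fin n → X)
    {t : ℝ} (ht : 0 < t) :
    ∑ y ∈ Finset.univ.filter (fun y => Real.exp ((n : ℝ) * mutInf (empType n x) W + t)
        * nuP W (empType n x) y < Wn W n x y), Wn W n x y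
      ≤ (n : ℝ) * (2 * Bn W n)^2 / t^2 := by
  classical
  set P := empType n x with hPdef
  have hPMF : IsPMF P := empType_isPMF hn x
  set PW : Y → ℝ := fun b => ∑ a, P a * W a b with hPWdef
  set z : Fin n → Y → ℝ :=
    fun i b => if W (x i) b = 0 then 0 else Real.log (W (x i) b) - Real.log (PW b) with hzdef
  set d : Fin n → ℝ := fun i => ∑ b, W (x i) b * z i b with hddef
  set u : Fin n → Y → ℝ := fun i b => z i b - d i with hudef
  have hn' : (0:ℝ) < n := by exact_mod_cast hn
  have hwm : 0 < wm W := wm_pos W hW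
  have hlogn : (0:ℝ) ≤ Real.log n := Real.log_nonneg (by exact_mod_cast hn)
  have hlogwm : Real.log (wm W) ≤ 0 := Real.log_nonpos hwm.le (wm_le_one W hW)
  -- (a)
  have hPWlb : ∀ (i : Fin n) (b : Y), W (x i) b ≠ 0 → wm W / n ≤ PW b := by
    intro i b hw
    have h1 : P (x i) * W (x i) b ≤ PW b :=
      Finset.single_le_sum (fun a _ => mul_nonneg (hPMF.1 a) (hW.1 a b)) (Finset.mem_univ (x i))
    have h2 : wm W / n ≤ P (x i) * W (x i) b := by
      have ha := empType_apply_self_ge hn x i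
      have hb := wm_le W hW hw
      calc wm W / n = (1 / n) * wm W := by ring
        _ ≤ P (x i) * W (x i) b := by
            apply mul_le_mul ha hb hwm.le (empType_nonneg x (x i))
    linarith
  have hPWub : ∀ b, PW b ≤ 1 := fun b => PW_le_one W hW hPMF b
  -- (b)
  have hz : ∀ (i : Fin n) (b : Y), |z i b| ≤ Bn W n := by
    intro i b
    by_cases hw : W (x i) b = 0
    · simp only [hzdef, hw, if_pos rfl]
      simpa using Bn_nonneg W hW hn
    · have hwp : 0 < W (x i) b := lt_of_le_of_ne (hW.1 _ _) (Ne.symm hw)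
      have hPWp : 0 < PW b := lt_of_lt_of_le (div_pos hwm hn') (hPWlb i b hw)
      have hup : Real.log (wm W / n) ≤ Real.log (PW b) :=
        Real.log_le_log (div_pos hwm hn') (hPWlb i b hw)
      have hlogdiv : Real.log (wm W / n) = Real.log (wm W) - Real.log n :=
        Real.log_div hwm.ne' (by exact_mod_cast hn.ne')
      have hWub : Real.log (W (x i) b) ≤ 0 := Real.log_nonpos hwp.le (W_le_one W hW _ _)
      have hWlb : Real.log (wm W) ≤ Real.log (W (x i) b) :=
        Real.log_le_log hwm (wm_le W hW hw)
      have hPWub' : Real.log (PW b) ≤ 0 := Real.log_nonpos hPWp.le (hPWub b)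
      simp only [hzdef, if_neg hw]
      rw [abs_le]
      unfold Bn
      constructor <;> [linarith; linarith]
  -- (c)
  have hd : ∀ i, |d i| ≤ Bn W n := by
    intro i
    calc |d i| ≤ ∑ b, |W (x i) b * z i b| := Finset.abs_sum_le_sum_abs _ _
      _ ≤ ∑ b, W (x i) b * Bn W n := by
          apply Finset.sum_le_sum
          intro b _
          rw [abs_mul, abs_of_nonneg (hW.1 _ _)]
          exact mul_le_mul_of_nonneg_left (hz i b) (hW.1 _ _)
      _ = Bn W n := by rw [← Finset.sum_mul, hW.2, one_mul]
  have hu2 : ∀ (i : Fin n) (b : Y), (u i b)^2 ≤ (2 * Bn W n)^2 := by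
    intro i b
    have h1 := hz i b
    have h2 := hd i
    rw [abs_le] at h1 h2
    apply sq_le_sq'
    · simp only [hudef]; linarith
    · simp only [hudef]; linarith
  -- (f)
  have hmean : ∀ i, ∑ b, W (x i) b * u i b = 0 := by
    intro i
    simp only [hudef, mul_sub]
    rw [Finset.sum_sub_distrib, ← Finset.sum_mul, hW.2, one_mul]
    simp only [hddef]
    exact sub_self _
  -- (e)
  have hvar : ∑ y : Fin n → Y, (∏ i, W (x i) (y i)) * (∑ i, u i (y i))^2
      = ∑ i, ∑ b, W (x i) b * (u i b)^2 :=
    sum_prod_sq (fun i => W (x i)) u (fun i => hW.2 (x i)) hmean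
  -- (d)
  have hdsum : ∑ i, d i = (n : ℝ) * mutInf P W := by
    set D : X → ℝ := fun a => ∑ b, W a b *
      (if W a b = 0 then 0 else Real.log (W a b) - Real.log (PW b)) with hDdef
    have step1 : ∑ i, d i = ∑ a, ((Finset.univ.filter (fun i => x i = a)).card : ℝ) * D a := by
      have h0 : ∀ i, d i = D (x i) := fun i => rfl
      rw [Finset.sum_congr rfl (fun i _ => h0 i)]
      rw [← Finset.sum_fiberwise_of_maps_to (g := x) (fun i _ => Finset.mem_univ (x i))]
      apply Finset.sum_congr rfl
      intro a _
      rw [Finset.sum_congr rfl (fun i hi => by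
        rw [(Finset.mem_filter.1 hi).2])]
      rw [Finset.sum_const, nsmul_eq_mul]
    have step2 : ∀ a, ((Finset.univ.filter (fun i => x i = a)).card : ℝ) = n * P a := by
      intro a
      simp only [hPdef]
      unfold empType
      field_simp
    have step3 : ∀ (a : X) (b : Y),
        P a * (W a b * (if W a b = 0 then 0 else Real.log (W a b) - Real.log (PW b)))
        = (if P a * W a b = 0 then 0 else P a * W a b * Real.log (W a b / PW b)) := by
      intro a b
      by_cases hw : W a b = 0
      · simp [hw]
      · by_cases hp : P a = 0
        · simp [hp, hw]
        · have hwp : 0 < W a b := lt_of_le_of_ne (hW.1 _ _) (Ne.symm hw)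
          have hpp : 0 < P a := lt_of_le_of_ne (hPMF.1 _) (Ne.symm hp)
          have hPWp : 0 < PW b := by
            calc (0:ℝ) < P a * W a b := mul_pos hpp hwp
              _ ≤ PW b := Finset.single_le_sum
                  (fun a' _ => mul_nonneg (hPMF.1 a') (hW.1 a' b)) (Finset.mem_univ a)
          have hne : P a * W a b ≠ 0 := mul_ne_zero hp hw
          rw [if_neg hw, if_neg hne, Real.log_div hwp.ne' hPWp.ne']
          ring
    rw [step1, Finset.sum_congr rfl (fun a _ => by rw [step2 a])]
    unfold mutInf
    rw [Finset.mul_sum]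
    apply Finset.sum_congr rfl
    intro a _
    simp only [hDdef]
    rw [Finset.mul_sum, Finset.mul_sum]
    apply Finset.sum_congr rfl
    intro b _
    rw [← step3 a b]
    ring
  -- pointwise
  have hpt : ∀ y ∈ Finset.univ.filter (fun y => Real.exp ((n : ℝ) * mutInf P W + t)
      * nuP W P y < Wn W n x y), t ≤ ∑ i, u i (y i) := by
    intro y hy
    have hy' := (Finset.mem_filter.1 hy).2
    have hnu : 0 ≤ nuP W P y := nuP_nonneg W hW hPMF.1 y
    have hWnpos : 0 < Wn W n x y :=
      lt_of_le_of_lt (mul_nonneg (Real.exp_pos _).le hnu) hy'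
    have hfac : ∀ i, 0 < W (x i) (y i) := by
      intro i
      rcases lt_or_eq_of_le (hW.1 (x i) (y i)) with h | h
      · exact h
      · exfalso
        have : Wn W n x y = 0 := Finset.prod_eq_zero (Finset.mem_univ i) h.symm
        rw [this] at hWnpos; exact lt_irrefl 0 hWnpos
    have hPWpos : ∀ i, 0 < PW (y i) :=
      fun i => lt_of_lt_of_le (div_pos hwm hn') (hPWlb i (y i) (hfac i).ne')
    have hnupos : 0 < nuP W P y := Finset.prod_pos (fun i _ => hPWpos i)
    have hlog := Real.log_lt_log (mul_pos (Real.exp_pos _) hnupos) hy'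
    rw [Real.log_mul (Real.exp_pos _).ne' hnupos.ne', Real.log_exp] at hlog
    have hlogWn : Real.log (Wn W n x y) = ∑ i, Real.log (W (x i) (y i)) := by
      unfold Wn
      exact Real.log_prod (fun i _ => (hfac i).ne')
    have hlognu : Real.log (nuP W P y) = ∑ i, Real.log (PW (y i)) := by
      unfold nuP
      exact Real.log_prod (fun i _ => (hPWpos i).ne')
    have hzsum : ∑ i, z i (y i) = Real.log (Wn W n x y) - Real.log (nuP W P y) := by
      rw [hlogWn, hlognu, ← Finset.sum_sub_distrib]
      apply Finset.sum_congr rfl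
      intro i _
      simp only [hzdef, if_neg (hfac i).ne']
    have husum : ∑ i, u i (y i) = (∑ i, z i (y i)) - ∑ i, d i := by
      simp only [hudef]
      rw [Finset.sum_sub_distrib]
    rw [husum, hzsum, hdsum]
    linarith
  -- final
  have ht2 : (0:ℝ) < t^2 := by positivity
  calc ∑ y ∈ Finset.univ.filter (fun y => Real.exp ((n : ℝ) * mutInf P W + t)
        * nuP W P y < Wn W n x y), Wn W n x y
      ≤ ∑ y ∈ Finset.univ.filter (fun y => Real.exp ((n : ℝ) * mutInf P W + t)
        * nuP W P y < Wn W n x y), Wn W n x y * ((∑ i, u i (y i))^2 / t^2) := by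
        apply Finset.sum_le_sum
        intro y hy
        have h1 := hpt y hy
        have h2 : t^2 ≤ (∑ i, u i (y i))^2 := by
          apply sq_le_sq' <;> linarith
        have h3 : 1 ≤ (∑ i, u i (y i))^2 / t^2 := (one_le_div ht2).2 h2
        nlinarith [Wn_nonneg W hW x y]
    _ ≤ ∑ y : Fin n → Y, Wn W n x y * ((∑ i, u i (y i))^2 / t^2) := by
        apply Finset.sum_le_sum_of_subset_of_nonneg (Finset.subset_univ _)
        intro y _ _
        have := Wn_nonneg W hW x y
        positivity
    _ = (∑ y : Fin n → Y, (∏ i, W (x i) (y i)) * (∑ i, u i (y i))^2) / t^2 := by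
        rw [Finset.sum_div]
        apply Finset.sum_congr rfl
        intro y _
        unfold Wn
        ring
    _ = (∑ i, ∑ b, W (x i) b * (u i b)^2) / t^2 := by rw [hvar]
    _ ≤ ((n : ℝ) * (2 * Bn W n)^2) / t^2 := by
        gcongr
        calc ∑ i, ∑ b, W (x i) b * (u i b)^2
            ≤ ∑ i : Fin n, ∑ b, W (x i) b * (2 * Bn W n)^2 := by
              apply Finset.sum_le_sum; intro i _
              apply Finset.sum_le_sum; intro b _
              exact mul_le_mul_of_nonneg_left (hu2 i b) (hW.1 _ _)
          _ = (n : ℝ) * (2 * Bn W n)^2 := by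
              rw [Finset.sum_congr rfl (fun i (_ : i ∈ Finset.univ) => by
                rw [← Finset.sum_mul, hW.2, one_mul])]
              simp [mul_comm]
  
end Chunk3
section Chunk4

lemma exp_coord {I K : Type} [DecidableEq I] [Fintype I] [Fintype K]
    (q : I → K → ℝ) (hq1 : ∀ i, ∑ b, q i b = 1) (j : I) (h : K → ℝ) :
    ∑ c : I → K, (∏ i, q i (c i)) * h (c j) = ∑ b, q j b * h b := by
  have claim1 : ∀ c : I → K, (∏ i, q i (c i)) * h (c j)
      = ∏ i, (q i (c i) * (if i = j then h (c i) else 1)) := by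
    intro c
    rw [Finset.prod_mul_distrib]
    congr 1
    rw [Finset.prod_ite_eq' Finset.univ j (fun i => h (c i))]
    simp
  rw [Finset.sum_congr rfl (fun c _ => claim1 c),
      sum_pi_prod (fun i b => q i b * (if i = j then h b else 1))]
  have hfac : ∀ i, (∑ b, q i b * (if i = j then h b else 1))
      = if i = j then ∑ b, q j b * h b else 1 := by
    intro i
    by_cases hi : i = j
    · subst hi; simp
    · simp [hi, hq1 i]
  rw [Finset.prod_congr rfl (fun i _ => hfac i)]
  rw [Finset.prod_ite_eq' Finset.univ j (fun _ => ∑ b, q j b * h b)]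
  simp

lemma exists_le_weighted {C : Type} [Fintype C] [Nonempty C] (w f : C → ℝ)
    (hw : ∀ c, 0 ≤ w c) (hw1 : ∑ c, w c = 1) : ∃ c, f c ≤ ∑ c, w c * f c := by
  by_contra hcon
  push_neg at hcon
  have hex : ∃ c₀ : C, w c₀ ≠ 0 := by
    by_contra he
    push_neg at he
    rw [Finset.sum_congr rfl (fun c _ => he c)] at hw1
    simpa using hw1
  obtain ⟨c₀, hc₀⟩ := hex
  have hc₀' : 0 < w c₀ := lt_of_le_of_ne (hw c₀) (Ne.symm hc₀)
  have hlt : ∑ c, w c * (∑ c', w c' * f c') < ∑ c, w c * f c := by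
    apply Finset.sum_lt_sum
    · intro c _
      exact mul_le_mul_of_nonneg_left (hcon c).le (hw c)
    · exact ⟨c₀, Finset.mem_univ c₀, mul_lt_mul_of_pos_left (hcon c₀) hc₀'⟩
  rw [← Finset.sum_mul, hw1, one_mul] at hlt
  exact lt_irrefl _ hlt

lemma jensen_abs {C : Type} [Fintype C] (w V : C → ℝ) (hw : ∀ c, 0 ≤ w c) (hw1 : ∑ c, w c = 1) :
    ∑ c, w c * |V c| ≤ Real.sqrt (∑ c, w c * (V c)^2) := by
  rw [show (∑ c, w c * |V c|) = ∑ c, Real.sqrt (w c) * (Real.sqrt (w c) * |V c|) from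
    Finset.sum_congr rfl (fun c _ => by
      rw [← mul_assoc, Real.mul_self_sqrt (hw c)])]
  have hCS := Finset.sum_mul_sq_le_sq_mul_sq Finset.univ
    (fun c => Real.sqrt (w c)) (fun c => Real.sqrt (w c) * |V c|)
  have h1 : ∑ c, (Real.sqrt (w c))^2 = 1 := by
    rw [Finset.sum_congr rfl (fun c _ => Real.sq_sqrt (hw c))]
    exact hw1
  have h2 : ∑ c, (Real.sqrt (w c) * |V c|)^2 = ∑ c, w c * (V c)^2 := by
    apply Finset.sum_congr rfl
    intro c _
    rw [mul_pow, Real.sq_sqrt (hw c), sq_abs]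
  rw [h1, h2, one_mul] at hCS
  have hnn : 0 ≤ ∑ c, Real.sqrt (w c) * (Real.sqrt (w c) * |V c|) :=
    Finset.sum_nonneg fun c _ => mul_nonneg (Real.sqrt_nonneg _)
      (mul_nonneg (Real.sqrt_nonneg _) (abs_nonneg _))
  have hnn2 : 0 ≤ ∑ c, w c * (V c)^2 :=
    Finset.sum_nonneg fun c _ => mul_nonneg (hw c) (sq_nonneg _)
  exact (Real.le_sqrt hnn hnn2).2 hCS

variable {X Y : Type} [Fintype X] [Fintype Y] [Nonempty X] [Nonempty Y]

lemma soft_cover (W : X → Y → ℝ) (hW : IsChannel W) {n : ℕ} (hn : 0 < n) {M : ℕ} (hM : 0 < M)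
    (Qb : (Fin n → X) → ℝ) (hQb : IsPMF Qb) (γ t : ℝ) (ht : 0 < t)
    (hsupp : ∀ x, Qb x ≠ 0 → (n : ℝ) * mutInf (empType n x) W + t ≤ γ) :
    ∃ c : Fin M → (Fin n → X),
      ∑ y, |(M:ℝ)⁻¹ * (∑ j, Wn W n (c j) y) - ∑ x, Qb x * Wn W n x y|
        ≤ Real.sqrt (Real.exp γ * (Tset X n).card / M)
          + 2 * ((n : ℝ) * (2 * Bn W n)^2 / t^2) := by
  classical
  have hM' : (0:ℝ) < M := by exact_mod_cast hM
  set pb : ℝ := (n : ℝ) * (2 * Bn W n)^2 / t^2 with hpbdef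
  have hpb : 0 ≤ pb := by
    apply div_nonneg ?_ (by positivity)
    have := Bn_nonneg W hW hn
    positivity
  set μ : (Fin n → Y) → ℝ := fun y => ∑ x, Qb x * Wn W n x y with hμdef
  set f : (Fin n → X) → (Fin n → Y) → ℝ :=
    fun x y => if Wn W n x y ≤ Real.exp γ * nuP W (empType n x) y then Wn W n x y else 0
    with hfdef
  set g : (Fin n → X) → (Fin n → Y) → ℝ := fun x y => Wn W n x y - f x y with hgdef
  have hf0 : ∀ x y, 0 ≤ f x y := by
    intro x y
    simp only [hfdef]
    split
    · exact Wn_nonneg W hW x y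
    · exact le_rfl
  have hfW : ∀ x y, f x y ≤ Wn W n x y := by
    intro x y
    simp only [hfdef]
    split
    · exact le_rfl
    · exact Wn_nonneg W hW x y
  have hg0 : ∀ x y, 0 ≤ g x y := fun x y => by simp only [hgdef]; linarith [hfW x y]
  have hfbd : ∀ x y, f x y ≤ Real.exp γ * nuP W (empType n x) y := by
    intro x y
    simp only [hfdef]
    split
    · assumption
    · exact mul_nonneg (Real.exp_pos _).le (nuP_nonneg W hW (empType_nonneg x) y)
  -- atypicality per codeword
  have hgx : ∀ x : Fin n → X, Qb x ≠ 0 → ∑ y, g x y ≤ pb := by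
    intro x hx
    have hstep : ∑ y, g x y
        = ∑ y ∈ Finset.univ.filter (fun y => ¬ (Wn W n x y ≤ Real.exp γ * nuP W (empType n x) y)),
            Wn W n x y := by
      rw [Finset.sum_filter]
      apply Finset.sum_congr rfl
      intro y _
      by_cases hcnd : Wn W n x y ≤ Real.exp γ * nuP W (empType n x) y
      · simp only [hgdef, hfdef]
        simp [hcnd]
      · simp only [hgdef, hfdef]
        simp [hcnd]
    rw [hstep]
    have hsub : ∀ y : Fin n → Y, ¬ (Wn W n x y ≤ Real.exp γ * nuP W (empType n x) y) →
        Real.exp ((n : ℝ) * mutInf (empType n x) W + t) * nuP W (empType n x) y < Wn W n x y := by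
      intro y hy
      push_neg at hy
      calc Real.exp ((n : ℝ) * mutInf (empType n x) W + t) * nuP W (empType n x) y
          ≤ Real.exp γ * nuP W (empType n x) y :=
            mul_le_mul_of_nonneg_right (Real.exp_le_exp.2 (hsupp x hx))
              (nuP_nonneg W hW (empType_nonneg x) y)
        _ < Wn W n x y := hy
    calc ∑ y ∈ Finset.univ.filter (fun y => ¬ (Wn W n x y ≤ Real.exp γ * nuP W (empType n x) y)),
          Wn W n x y
        ≤ ∑ y ∈ Finset.univ.filter (fun y => Real.exp ((n : ℝ) * mutInf (empType n x) W + t)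
            * nuP W (empType n x) y < Wn W n x y), Wn W n x y := by
          apply Finset.sum_le_sum_of_subset_of_nonneg
          · intro y hy
            rw [Finset.mem_filter] at hy ⊢
            exact ⟨hy.1, hsub y hy.2⟩
          · intro y _ _
            exact Wn_nonneg W hW x y
      _ ≤ pb := cheb W hW hn x ht
  set fbar : (Fin n → Y) → ℝ := fun y => ∑ x, Qb x * f x y with hfbardef
  set gbar : (Fin n → Y) → ℝ := fun y => ∑ x, Qb x * g x y with hgbardef
  have hgbar0 : ∀ y, 0 ≤ gbar y :=
    fun y => Finset.sum_nonneg fun x _ => mul_nonneg (hQb.1 x) (hg0 x y)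
  have hgbarsum : ∑ y, gbar y ≤ pb := by
    rw [Finset.sum_comm]
    calc ∑ x, ∑ y, Qb x * g x y = ∑ x, Qb x * ∑ y, g x y := by
          apply Finset.sum_congr rfl; intro x _; rw [Finset.mul_sum]
      _ ≤ ∑ x, Qb x * pb := by
          apply Finset.sum_le_sum
          intro x _
          by_cases hx : Qb x = 0
          · simp [hx]
          · exact mul_le_mul_of_nonneg_left (hgx x hx) (hQb.1 x)
      _ = pb := by rw [← Finset.sum_mul, hQb.2, one_mul]
  have hμ : ∀ y, μ y = fbar y + gbar y := by
    intro y
    simp only [hμdef, hfbardef, hgbardef, hgdef, mul_sub]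
    rw [← Finset.sum_add_distrib]
    apply Finset.sum_congr rfl
    intro x _
    ring
  have hfbarμ : ∀ y, fbar y ≤ μ y := by
    intro y
    rw [hμ y]
    linarith [hgbar0 y]
  have hfbar0 : ∀ y, 0 ≤ fbar y :=
    fun y => Finset.sum_nonneg fun x _ => mul_nonneg (hQb.1 x) (hf0 x y)
  have hμ0 : ∀ y, 0 ≤ μ y :=
    fun y => Finset.sum_nonneg fun x _ => mul_nonneg (hQb.1 x) (Wn_nonneg W hW x y)
  have hμ1 : ∑ y, μ y = 1 := by
    simp only [hμdef]
    rw [Finset.sum_comm]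
    calc ∑ x, ∑ y, Qb x * Wn W n x y = ∑ x, Qb x * ∑ y, Wn W n x y := by
          apply Finset.sum_congr rfl; intro x _; rw [Finset.mul_sum]
      _ = 1 := by
          rw [Finset.sum_congr rfl (fun x _ => by rw [sum_Wn W hW x, mul_one])]
          exact hQb.2
  -- codebook distribution
  set Wc : (Fin M → (Fin n → X)) → ℝ := fun c => ∏ j, Qb (c j) with hWcdef
  have hWc0 : ∀ c, 0 ≤ Wc c := fun c => Finset.prod_nonneg fun j _ => hQb.1 (c j)
  have hWc1 : ∑ c, Wc c = 1 := by
    simp only [hWcdef]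
    rw [sum_pi_prod (fun (j : Fin M) x => Qb x)]
    simp [hQb.2]
  -- per-y second moment bound
  have hvary : ∀ y, ∑ c, Wc c * ((M:ℝ)⁻¹ * (∑ j, f (c j) y) - fbar y)^2
      ≤ (M:ℝ)⁻¹ * ∑ x, Qb x * (f x y)^2 := by
    intro y
    set v : (Fin n → X) → ℝ := fun x => f x y - fbar y with hvdef
    have hv0 : ∑ x, Qb x * v x = 0 := by
      simp only [hvdef, mul_sub]
      rw [Finset.sum_sub_distrib, ← Finset.sum_mul, hQb.2, one_mul]
      simp only [hfbardef]
      exact sub_self _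
    have hkey := sum_prod_sq (fun _ : Fin M => Qb) (fun _ => v) (fun _ => hQb.2) (fun _ => hv0)
    have hrw : ∀ c : Fin M → (Fin n → X),
        ((M:ℝ)⁻¹ * (∑ j, f (c j) y) - fbar y) = (M:ℝ)⁻¹ * ∑ j, v (c j) := by
      intro c
      simp only [hvdef]
      rw [Finset.sum_sub_distrib, Finset.sum_const, Finset.card_univ, Fintype.card_fin,
        nsmul_eq_mul, mul_sub]
      field_simp
    have hvsq : ∑ x, Qb x * (v x)^2 ≤ ∑ x, Qb x * (f x y)^2 := by
      have hexp : ∑ x, Qb x * (v x)^2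
          = ∑ x, Qb x * (f x y)^2 - 2 * fbar y * (∑ x, Qb x * f x y)
            + (fbar y)^2 * (∑ x, Qb x) := by
        rw [Finset.sum_congr rfl (fun x (_ : x ∈ Finset.univ) => by
          show Qb x * (v x)^2 = Qb x * (f x y)^2 - 2 * fbar y * (Qb x * f x y)
            + (fbar y)^2 * Qb x
          simp only [hvdef]; ring)]
        rw [Finset.sum_add_distrib, Finset.sum_sub_distrib, ← Finset.mul_sum, ← Finset.mul_sum]
      rw [hexp, hQb.2]
      have hfb : ∑ x, Qb x * f x y = fbar y := rfl
      rw [hfb]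
      nlinarith [sq_nonneg (fbar y)]
    calc ∑ c, Wc c * ((M:ℝ)⁻¹ * (∑ j, f (c j) y) - fbar y)^2
        = (M:ℝ)⁻¹^2 * ∑ c, Wc c * (∑ j, v (c j))^2 := by
          rw [Finset.mul_sum]
          apply Finset.sum_congr rfl
          intro c _
          rw [hrw c]
          ring
      _ = (M:ℝ)⁻¹^2 * ((M:ℝ) * ∑ x, Qb x * (v x)^2) := by
          rw [hkey]
          congr 1
          rw [Finset.sum_const, Finset.card_univ, Fintype.card_fin, nsmul_eq_mul]
      _ = (M:ℝ)⁻¹ * ∑ x, Qb x * (v x)^2 := by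
          field_simp
      _ ≤ (M:ℝ)⁻¹ * ∑ x, Qb x * (f x y)^2 := by
          apply mul_le_mul_of_nonneg_left hvsq (by positivity)
  -- per-y f-second-moment vs nustar
  have hf2 : ∀ y, ∑ x, Qb x * (f x y)^2 ≤ Real.exp γ * nustar W n y * μ y := by
    intro y
    calc ∑ x, Qb x * (f x y)^2
        ≤ ∑ x, Qb x * ((Real.exp γ * nustar W n y) * f x y) := by
          apply Finset.sum_le_sum
          intro x _
          apply mul_le_mul_of_nonneg_left ?_ (hQb.1 x)
          rw [sq]
          apply mul_le_mul_of_nonneg_right ?_ (hf0 x y)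
          calc f x y ≤ Real.exp γ * nuP W (empType n x) y := hfbd x y
            _ ≤ Real.exp γ * nustar W n y :=
              mul_le_mul_of_nonneg_left (nuP_le_nustar W hW x y) (Real.exp_pos _).le
      _ = (Real.exp γ * nustar W n y) * fbar y := by
          rw [Finset.mul_sum]
          apply Finset.sum_congr rfl
          intro x _
          ring
      _ ≤ Real.exp γ * nustar W n y * μ y := by
          apply mul_le_mul_of_nonneg_left (hfbarμ y)
          exact mul_nonneg (Real.exp_pos _).le (nustar_nonneg W hW y)
  -- expectation of the total variation
  set val : (Fin M → (Fin n → X)) → ℝ :=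
    fun c => ∑ y, |(M:ℝ)⁻¹ * (∑ j, Wn W n (c j) y) - μ y| with hvaldef
  have hsplit : ∀ (c : Fin M → Fin n → X) (y : Fin n → Y), |(M:ℝ)⁻¹ * (∑ j, Wn W n (c j) y) - μ y|
      ≤ |(M:ℝ)⁻¹ * (∑ j, f (c j) y) - fbar y| + (M:ℝ)⁻¹ * (∑ j, g (c j) y) + gbar y := by
    intro c y
    have hdecomp : (M:ℝ)⁻¹ * (∑ j, Wn W n (c j) y)
        = (M:ℝ)⁻¹ * (∑ j, f (c j) y) + (M:ℝ)⁻¹ * (∑ j, g (c j) y) := by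
      rw [← mul_add, ← Finset.sum_add_distrib]
      congr 1
      apply Finset.sum_congr rfl
      intro j _
      simp only [hgdef]
      ring
    have hg1 : 0 ≤ (M:ℝ)⁻¹ * (∑ j, g (c j) y) := by
      apply mul_nonneg (by positivity)
      exact Finset.sum_nonneg fun j _ => hg0 (c j) y
    have hg2 := hgbar0 y
    rw [hdecomp, hμ y]
    rw [abs_le]
    constructor
    · have := abs_le.1 (le_refl |(M:ℝ)⁻¹ * (∑ j, f (c j) y) - fbar y|)
      have h3 := neg_abs_le ((M:ℝ)⁻¹ * (∑ j, f (c j) y) - fbar y)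
      linarith
    · have h3 := le_abs_self ((M:ℝ)⁻¹ * (∑ j, f (c j) y) - fbar y)
      linarith
  have hEcoord : ∀ (h : (Fin n → X) → ℝ) (j : Fin M),
      ∑ c, Wc c * h (c j) = ∑ x, Qb x * h x :=
    fun h j => exp_coord (fun _ : Fin M => Qb) (fun _ => hQb.2) j h
  have hEval : ∑ c, Wc c * val c
      ≤ Real.sqrt (Real.exp γ * (Tset X n).card / M) + 2 * pb := by
    have hterm : ∑ c, Wc c * val c
        ≤ (∑ y, ∑ c, Wc c * |(M:ℝ)⁻¹ * (∑ j, f (c j) y) - fbar y|)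
          + (∑ y, ∑ c, Wc c * ((M:ℝ)⁻¹ * (∑ j, g (c j) y)))
          + ∑ y, gbar y := by
      calc ∑ c, Wc c * val c
          ≤ ∑ c, Wc c * ∑ y, (|(M:ℝ)⁻¹ * (∑ j, f (c j) y) - fbar y|
              + (M:ℝ)⁻¹ * (∑ j, g (c j) y) + gbar y) := by
            apply Finset.sum_le_sum
            intro c _
            apply mul_le_mul_of_nonneg_left ?_ (hWc0 c)
            apply Finset.sum_le_sum
            intro y _
            exact hsplit c y
        _ = (∑ c, ∑ y, Wc c * |(M:ℝ)⁻¹ * (∑ j, f (c j) y) - fbar y|)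
            + (∑ c, ∑ y, Wc c * ((M:ℝ)⁻¹ * (∑ j, g (c j) y)))
            + ∑ c, ∑ y, Wc c * gbar y := by
            rw [← Finset.sum_add_distrib, ← Finset.sum_add_distrib]
            apply Finset.sum_congr rfl
            intro c _
            rw [Finset.mul_sum, ← Finset.sum_add_distrib, ← Finset.sum_add_distrib]
            apply Finset.sum_congr rfl
            intro y _
            ring
        _ = (∑ y, ∑ c, Wc c * |(M:ℝ)⁻¹ * (∑ j, f (c j) y) - fbar y|)
            + (∑ y, ∑ c, Wc c * ((M:ℝ)⁻¹ * (∑ j, g (c j) y)))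
            + ∑ y, gbar y := by
            rw [Finset.sum_comm (f := fun c y => Wc c * |(M:ℝ)⁻¹ * (∑ j, f (c j) y) - fbar y|)]
            rw [Finset.sum_comm (f := fun c y => Wc c * ((M:ℝ)⁻¹ * (∑ j, g (c j) y)))]
            congr 1
            calc ∑ c, ∑ y, Wc c * gbar y = ∑ c, Wc c * ∑ y, gbar y := by
                  apply Finset.sum_congr rfl; intro c _; rw [Finset.mul_sum]
              _ = ∑ y, gbar y := by rw [← Finset.sum_mul, hWc1, one_mul]
    -- bound term 2
    have ht2 : ∑ y, ∑ c, Wc c * ((M:ℝ)⁻¹ * (∑ j, g (c j) y)) = ∑ y, gbar y := by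
      apply Finset.sum_congr rfl
      intro y _
      calc ∑ c, Wc c * ((M:ℝ)⁻¹ * (∑ j, g (c j) y))
          = (M:ℝ)⁻¹ * ∑ c, ∑ j, Wc c * g (c j) y := by
            rw [Finset.mul_sum]
            apply Finset.sum_congr rfl
            intro c _
            rw [← mul_assoc, mul_comm (Wc c) (M:ℝ)⁻¹, mul_assoc, Finset.mul_sum]
        _ = (M:ℝ)⁻¹ * ∑ j, ∑ c, Wc c * g (c j) y := by rw [Finset.sum_comm]
        _ = (M:ℝ)⁻¹ * ∑ j : Fin M, gbar y := by
            apply congrArg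
            apply Finset.sum_congr rfl
            intro j _
            exact hEcoord (fun x => g x y) j
        _ = gbar y := by
            rw [Finset.sum_const, Finset.card_univ, Fintype.card_fin, nsmul_eq_mul]
            field_simp
    -- bound term 1
    have ht1 : ∑ y, ∑ c, Wc c * |(M:ℝ)⁻¹ * (∑ j, f (c j) y) - fbar y|
        ≤ Real.sqrt (Real.exp γ * (Tset X n).card / M) := by
      have hy1 : ∀ y, ∑ c, Wc c * |(M:ℝ)⁻¹ * (∑ j, f (c j) y) - fbar y|
          ≤ Real.sqrt ((M:ℝ)⁻¹ * (Real.exp γ * nustar W n y * μ y)) := by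
        intro y
        calc ∑ c, Wc c * |(M:ℝ)⁻¹ * (∑ j, f (c j) y) - fbar y|
            ≤ Real.sqrt (∑ c, Wc c * ((M:ℝ)⁻¹ * (∑ j, f (c j) y) - fbar y)^2) :=
              jensen_abs Wc _ hWc0 hWc1
          _ ≤ Real.sqrt ((M:ℝ)⁻¹ * (Real.exp γ * nustar W n y * μ y)) := by
              apply Real.sqrt_le_sqrt
              calc ∑ c, Wc c * ((M:ℝ)⁻¹ * (∑ j, f (c j) y) - fbar y)^2
                  ≤ (M:ℝ)⁻¹ * ∑ x, Qb x * (f x y)^2 := hvary y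
                _ ≤ (M:ℝ)⁻¹ * (Real.exp γ * nustar W n y * μ y) :=
                    mul_le_mul_of_nonneg_left (hf2 y) (by positivity)
      calc ∑ y, ∑ c, Wc c * |(M:ℝ)⁻¹ * (∑ j, f (c j) y) - fbar y|
          ≤ ∑ y, Real.sqrt ((M:ℝ)⁻¹ * (Real.exp γ * nustar W n y * μ y)) :=
            Finset.sum_le_sum fun y _ => hy1 y
        _ = ∑ y, Real.sqrt ((M:ℝ)⁻¹ * Real.exp γ) * (Real.sqrt (nustar W n y) * Real.sqrt (μ y)) := by
            apply Finset.sum_congr rfl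
            intro y _
            have hν := nustar_nonneg W hW y
            have hμy := hμ0 y
            rw [show (M:ℝ)⁻¹ * (Real.exp γ * nustar W n y * μ y)
                = ((M:ℝ)⁻¹ * Real.exp γ) * (nustar W n y * μ y) by ring]
            rw [Real.sqrt_mul (by positivity) (nustar W n y * μ y),
                Real.sqrt_mul hν (μ y)]
        _ ≤ Real.sqrt ((M:ℝ)⁻¹ * Real.exp γ) * (Real.sqrt ((Tset X n).card) * Real.sqrt 1) := by
            rw [← Finset.mul_sum]
            apply mul_le_mul_of_nonneg_left ?_ (Real.sqrt_nonneg _)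
            have hCS := Finset.sum_mul_sq_le_sq_mul_sq Finset.univ
              (fun y : Fin n → Y => Real.sqrt (nustar W n y)) (fun y => Real.sqrt (μ y))
            have e1 : ∑ y : Fin n → Y, (Real.sqrt (nustar W n y))^2 = (Tset X n).card := by
              rw [Finset.sum_congr rfl (fun y (_ : y ∈ Finset.univ) =>
                Real.sq_sqrt (nustar_nonneg W hW y))]
              exact sum_nustar W hW hn
            have e2 : ∑ y : Fin n → Y, (Real.sqrt (μ y))^2 = 1 := by
              rw [Finset.sum_congr rfl (fun y (_ : y ∈ Finset.univ) =>
                Real.sq_sqrt (hμ0 y))]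
              exact hμ1
            rw [e1, e2] at hCS
            have hnn : 0 ≤ ∑ y : Fin n → Y, Real.sqrt (nustar W n y) * Real.sqrt (μ y) :=
              Finset.sum_nonneg fun y _ => mul_nonneg (Real.sqrt_nonneg _) (Real.sqrt_nonneg _)
            calc ∑ y : Fin n → Y, Real.sqrt (nustar W n y) * Real.sqrt (μ y)
                = Real.sqrt ((∑ y : Fin n → Y, Real.sqrt (nustar W n y) * Real.sqrt (μ y))^2) := by
                  rw [Real.sqrt_sq hnn]
              _ ≤ Real.sqrt (((Tset X n).card : ℝ) * 1) := Real.sqrt_le_sqrt hCS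
              _ = Real.sqrt ((Tset X n).card) * Real.sqrt 1 := by
                  rw [Real.sqrt_mul (by positivity)]
        _ = Real.sqrt (Real.exp γ * (Tset X n).card / M) := by
            rw [Real.sqrt_one, mul_one, ← Real.sqrt_mul (by positivity)]
            congr 1
            ring
    calc ∑ c, Wc c * val c
        ≤ (∑ y, ∑ c, Wc c * |(M:ℝ)⁻¹ * (∑ j, f (c j) y) - fbar y|)
          + (∑ y, ∑ c, Wc c * ((M:ℝ)⁻¹ * (∑ j, g (c j) y)))
          + ∑ y, gbar y := hterm
      _ ≤ Real.sqrt (Real.exp γ * (Tset X n).card / M) + (∑ y, gbar y) + ∑ y, gbar y := by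
          rw [ht2]
          have := ht1
          linarith
      _ ≤ Real.sqrt (Real.exp γ * (Tset X n).card / M) + 2 * pb := by
          have := hgbarsum
          linarith
  obtain ⟨c, hc⟩ := exists_le_weighted Wc val hWc0 hWc1
  exact ⟨c, le_trans hc hEval⟩

end Chunk4
section Chunk5

variable {X Y : Type} [Fintype X] [Fintype Y] [Nonempty X] [Nonempty Y]

set_option maxHeartbeats 1000000 in
lemma bad_count (W : X → Y → ℝ) (hW : IsChannel W) {n k : ℕ} (hn : 0 < n)
    (Q : Fin k → (Fin n → X) → ℝ) (D : Fin k → Finset (Fin n → Y))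
    (l1 l2 κ δ : ℝ) (hcode : IsIDCode n W Q D l1 l2)
    (hκ : 0 < κ) (hδ : δ = κ - l1 - l2) (hδpos : 0 < δ)
    (L : ℕ) (hL : (8:ℝ)/δ ≤ L)
    {M : ℕ} (hM : 0 < M) (γ t : ℝ) (ht : 0 < t) (B : Finset (Fin n → X))
    (hB : ∀ x ∈ B, (n : ℝ) * mutInf (empType n x) W + t ≤ γ)
    (hsc : Real.sqrt (Real.exp γ * (Tset X n).card / M)
        + 2 * ((n : ℝ) * (2 * Bn W n)^2 / t^2) ≤ δ/4) :
    (Finset.univ.filter (fun m => κ ≤ ∑ x ∈ B, Q m x)).card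
      ≤ (L+1) * (Fintype.card X)^(n*M) := by
  classical
  have hM' : (0:ℝ) < M := by exact_mod_cast hM
  have hL0 : (0:ℝ) < L := lt_of_lt_of_le (by positivity) hL
  have hQnn : ∀ (m : Fin k) (x : Fin n → X), 0 ≤ Q m x := fun m x => (hcode.1 m).1 x
  have hq1 : ∀ m : Fin k, ∑ x ∈ B, Q m x ≤ 1 := by
    intro m
    rw [← (hcode.1 m).2]
    exact Finset.sum_le_sum_of_subset_of_nonneg (Finset.subset_univ B)
      (fun x _ _ => hQnn m x)
  -- soft covering existence for each "bad" m
  have hex : ∀ m : Fin k, κ ≤ ∑ x ∈ B, Q m x →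
      ∃ c : Fin M → (Fin n → X),
        ∑ y, |(M:ℝ)⁻¹ * (∑ j, Wn W n (c j) y)
            - ∑ x, (if x ∈ B then Q m x / (∑ x' ∈ B, Q m x') else 0) * Wn W n x y| ≤ δ/4 := by
    intro m hm
    have hqm : 0 < ∑ x ∈ B, Q m x := lt_of_lt_of_le hκ hm
    set Qb : (Fin n → X) → ℝ := fun x => if x ∈ B then Q m x / (∑ x' ∈ B, Q m x') else 0
      with hQbdef
    have hQb : IsPMF Qb := by
      constructor
      · intro x
        simp only [hQbdef]
        split
        · exact div_nonneg (hQnn m x) hqm.le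
        · exact le_rfl
      · simp only [hQbdef]
        rw [Finset.sum_ite_mem, Finset.univ_inter, ← Finset.sum_div, div_self hqm.ne']
    have hsupp : ∀ x, Qb x ≠ 0 → (n : ℝ) * mutInf (empType n x) W + t ≤ γ := by
      intro x hx
      by_cases hxB : x ∈ B
      · exact hB x hxB
      · exact absurd (by simp only [hQbdef, if_neg hxB]) hx
    obtain ⟨c, hc⟩ := soft_cover W hW hn hM Qb hQb γ t ht hsupp
    exact ⟨c, le_trans hc hsc⟩
  -- fingerprint map
  set F : Fin k → Fin (L+1) × (Fin M → (Fin n → X)) := fun m =>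
    if h : κ ≤ ∑ x ∈ B, Q m x then
      (⟨min L ⌊(∑ x ∈ B, Q m x) * L⌋₊, lt_of_le_of_lt (min_le_left _ _) (Nat.lt_succ_self L)⟩,
        Classical.choose (hex m h))
    else Classical.arbitrary _
    with hFdef
  have hinj : Set.InjOn F (Finset.univ.filter (fun m => κ ≤ ∑ x ∈ B, Q m x) : Finset (Fin k)) := by
    intro m hm m' hm' heq
    rw [Finset.coe_filter] at hm hm'
    simp only [Set.mem_setOf_eq] at hm hm'
    obtain ⟨-, hm⟩ := hm
    obtain ⟨-, hm'⟩ := hm'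
    by_contra hne
    have hqmpos : 0 < ∑ x ∈ B, Q m x := lt_of_lt_of_le hκ hm
    have hqm'pos : 0 < ∑ x ∈ B, Q m' x := lt_of_lt_of_le hκ hm'
    simp only [hFdef, dif_pos hm, dif_pos hm'] at heq
    have hc := Classical.choose_spec (hex m hm)
    have hc' := Classical.choose_spec (hex m' hm')
    set c := Classical.choose (hex m hm) with hcdef
    have hceq : Classical.choose (hex m' hm') = c := (congrArg Prod.snd heq).symm
    rw [hceq] at hc'
    -- floors equal ⇒ qm, qm' close
    have hfl : min L ⌊(∑ x ∈ B, Q m x) * L⌋₊ = min L ⌊(∑ x ∈ B, Q m' x) * L⌋₊ := by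
      have h := congrArg Prod.fst heq
      simpa [Fin.mk.injEq] using h
    have hflle : ∀ q : ℝ, q ≤ 1 → ⌊q * L⌋₊ ≤ L := by
      intro q hq
      calc ⌊q * L⌋₊ ≤ ⌊(L:ℝ)⌋₊ := Nat.floor_le_floor (by nlinarith)
        _ = L := Nat.floor_natCast L
    have hmin : ⌊(∑ x ∈ B, Q m x) * L⌋₊ = ⌊(∑ x ∈ B, Q m' x) * L⌋₊ := by
      rwa [min_eq_right (hflle _ (hq1 m)), min_eq_right (hflle _ (hq1 m'))] at hfl
    have hclose : |(∑ x ∈ B, Q m x) - (∑ x ∈ B, Q m' x)| ≤ 2 / L := by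
      have h1 : (⌊(∑ x ∈ B, Q m x) * L⌋₊ : ℝ) ≤ (∑ x ∈ B, Q m x) * L :=
        Nat.floor_le (by positivity)
      have h2 : (∑ x ∈ B, Q m x) * L < ⌊(∑ x ∈ B, Q m x) * L⌋₊ + 1 := Nat.lt_floor_add_one _
      have h3 : (⌊(∑ x ∈ B, Q m' x) * L⌋₊ : ℝ) ≤ (∑ x ∈ B, Q m' x) * L :=
        Nat.floor_le (by positivity)
      have h4 : (∑ x ∈ B, Q m' x) * L < ⌊(∑ x ∈ B, Q m' x) * L⌋₊ + 1 := Nat.lt_floor_add_one _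
      rw [hmin] at h1 h2
      have hinv : (0:ℝ) < 1/L := by positivity
      have e1 : (∑ x ∈ B, Q m' x) - (∑ x ∈ B, Q m x) < 1/L := by
        rw [lt_div_iff₀ hL0]
        nlinarith
      have e2 : (∑ x ∈ B, Q m x) - (∑ x ∈ B, Q m' x) < 1/L := by
        rw [lt_div_iff₀ hL0]
        nlinarith
      rw [abs_le]
      constructor
      · rw [show (2:ℝ)/L = 2 * (1/L) by ring]
        linarith
      · rw [show (2:ℝ)/L = 2 * (1/L) by ring]
        linarith
    -- approximate decoding-set measure
    set ED : ℝ := (M:ℝ)⁻¹ * ∑ j, ∑ y ∈ D m, Wn W n (c j) y with hEDdef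
    have hED0 : 0 ≤ ED := by
      apply mul_nonneg (by positivity)
      exact Finset.sum_nonneg fun j _ => sum_Wn_subset_nonneg W hW _ _
    have hED1 : ED ≤ 1 := by
      simp only [hEDdef]
      calc (M:ℝ)⁻¹ * ∑ j, ∑ y ∈ D m, Wn W n (c j) y
          ≤ (M:ℝ)⁻¹ * ∑ j : Fin M, 1 := by
            apply mul_le_mul_of_nonneg_left ?_ (by positivity)
            exact Finset.sum_le_sum fun j _ => sum_Wn_subset_le_one W hW _ _
        _ = 1 := by
            rw [Finset.sum_const, Finset.card_univ, Fintype.card_fin, nsmul_eq_mul, mul_one]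
            exact inv_mul_cancel₀ hM'.ne'
    have hEDcmp : ∀ m₀ : Fin k, (κ ≤ ∑ x ∈ B, Q m₀ x) →
        (∑ y, |(M:ℝ)⁻¹ * (∑ j, Wn W n (c j) y)
          - ∑ x, (if x ∈ B then Q m₀ x / (∑ x' ∈ B, Q m₀ x') else 0) * Wn W n x y| ≤ δ/4) →
        |(∑ x ∈ B, Q m₀ x * ∑ y ∈ D m, Wn W n x y) - (∑ x' ∈ B, Q m₀ x') * ED| ≤ δ/4 := by
      intro m₀ hm₀ hc₀
      have hq₀pos : 0 < ∑ x' ∈ B, Q m₀ x' := lt_of_lt_of_le hκ hm₀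
      have hq₀1 : (∑ x' ∈ B, Q m₀ x') ≤ 1 := hq1 m₀
      set mix : (Fin n → Y) → ℝ :=
        fun y => ∑ x, (if x ∈ B then Q m₀ x / (∑ x' ∈ B, Q m₀ x') else 0) * Wn W n x y
        with hmixdef
      set avg : (Fin n → Y) → ℝ := fun y => (M:ℝ)⁻¹ * (∑ j, Wn W n (c j) y) with havgdef
      have hqmix : ∀ y, (∑ x' ∈ B, Q m₀ x') * mix y = ∑ x ∈ B, Q m₀ x * Wn W n x y := by
        intro y
        simp only [hmixdef]
        rw [Finset.mul_sum]
        rw [Finset.sum_congr rfl (fun x (_ : x ∈ Finset.univ) => by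
          show (∑ x' ∈ B, Q m₀ x') * ((if x ∈ B then Q m₀ x / (∑ x' ∈ B, Q m₀ x') else 0)
            * Wn W n x y) = if x ∈ B then Q m₀ x * Wn W n x y else 0
          split
          · field_simp
          · ring)]
        rw [Finset.sum_ite_mem, Finset.univ_inter]
      have hkey : (∑ x ∈ B, Q m₀ x * ∑ y ∈ D m, Wn W n x y) - (∑ x' ∈ B, Q m₀ x') * ED
          = (∑ x' ∈ B, Q m₀ x') * ∑ y ∈ D m, (mix y - avg y) := by
        have e1 : ∑ x ∈ B, Q m₀ x * ∑ y ∈ D m, Wn W n x y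
            = ∑ y ∈ D m, (∑ x' ∈ B, Q m₀ x') * mix y := by
          rw [Finset.sum_congr rfl (fun y (_ : y ∈ D m) => hqmix y)]
          rw [Finset.sum_comm]
          apply Finset.sum_congr rfl
          intro x _
          rw [Finset.mul_sum]
        have e2 : (∑ x' ∈ B, Q m₀ x') * ED = ∑ y ∈ D m, (∑ x' ∈ B, Q m₀ x') * avg y := by
          simp only [hEDdef, havgdef]
          rw [← Finset.mul_sum]
          congr 1
          rw [← Finset.mul_sum]
          congr 1
          rw [Finset.sum_comm]
        rw [e1, e2, ← Finset.sum_sub_distrib, Finset.mul_sum]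
        apply Finset.sum_congr rfl
        intro y _
        ring
      rw [hkey, abs_mul, abs_of_pos hq₀pos]
      calc (∑ x' ∈ B, Q m₀ x') * |∑ y ∈ D m, (mix y - avg y)|
          ≤ 1 * |∑ y ∈ D m, (mix y - avg y)| :=
            mul_le_mul_of_nonneg_right hq₀1 (abs_nonneg _)
        _ = |∑ y ∈ D m, (mix y - avg y)| := one_mul _
        _ ≤ ∑ y ∈ D m, |mix y - avg y| := Finset.abs_sum_le_sum_abs _ _
        _ ≤ ∑ y, |mix y - avg y| :=
            Finset.sum_le_sum_of_subset_of_nonneg (Finset.subset_univ _)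
              (fun y _ _ => abs_nonneg _)
        _ ≤ δ/4 := by
            refine le_trans (le_of_eq ?_) hc₀
            apply Finset.sum_congr rfl
            intro y _
            rw [abs_sub_comm]
    have hcmp1 := hEDcmp m hm hc
    have hcmp2 := hEDcmp m' hm' hc'
    -- code-based bounds
    have hmiss : ∑ x ∈ B, Q m x * ∑ y ∈ D m, Wn W n x y ≥ (∑ x ∈ B, Q m x) - l1 := by
      have hcompl : ∀ x : Fin n → X, ∑ y ∈ D m, Wn W n x y
          = 1 - ∑ y ∈ (D m)ᶜ, Wn W n x y := by
        intro x
        have := Finset.sum_add_sum_compl (D m) (fun y => Wn W n x y)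
        rw [sum_Wn W hW x] at this
        linarith
      have hb1 : ∑ x ∈ B, Q m x * ∑ y ∈ (D m)ᶜ, Wn W n x y ≤ l1 := by
        calc ∑ x ∈ B, Q m x * ∑ y ∈ (D m)ᶜ, Wn W n x y
            ≤ ∑ x, Q m x * ∑ y ∈ (D m)ᶜ, Wn W n x y :=
              Finset.sum_le_sum_of_subset_of_nonneg (Finset.subset_univ _)
                (fun x _ _ => mul_nonneg (hQnn m x) (sum_Wn_subset_nonneg W hW _ _))
          _ ≤ l1 := hcode.2.1 m
      calc ∑ x ∈ B, Q m x * ∑ y ∈ D m, Wn W n x y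
          = ∑ x ∈ B, (Q m x - Q m x * ∑ y ∈ (D m)ᶜ, Wn W n x y) := by
            apply Finset.sum_congr rfl
            intro x _
            rw [hcompl x]
            ring
        _ = (∑ x ∈ B, Q m x) - ∑ x ∈ B, Q m x * ∑ y ∈ (D m)ᶜ, Wn W n x y :=
            Finset.sum_sub_distrib _ _
        _ ≥ (∑ x ∈ B, Q m x) - l1 := by linarith
    have hwrong : ∑ x ∈ B, Q m' x * ∑ y ∈ D m, Wn W n x y ≤ l2 := by
      calc ∑ x ∈ B, Q m' x * ∑ y ∈ D m, Wn W n x y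
          ≤ ∑ x, Q m' x * ∑ y ∈ D m, Wn W n x y :=
            Finset.sum_le_sum_of_subset_of_nonneg (Finset.subset_univ _)
              (fun x _ _ => mul_nonneg (hQnn m' x) (sum_Wn_subset_nonneg W hW _ _))
        _ ≤ l2 := hcode.2.2 m' m (Ne.symm hne)
    -- combine
    have hLbd : 2 / (L:ℝ) ≤ δ/4 := by
      rw [div_le_iff₀ hδpos] at hL
      rw [div_le_div_iff₀ hL0 (by norm_num : (0:ℝ) < 4)]
      nlinarith
    have habs1 := abs_le.1 hcmp1
    have habs2 := abs_le.1 hcmp2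
    have habs3 := abs_le.1 hclose
    have hEDdiff : (∑ x ∈ B, Q m x) * ED - (∑ x ∈ B, Q m' x) * ED ≤ 2/L := by
      calc (∑ x ∈ B, Q m x) * ED - (∑ x ∈ B, Q m' x) * ED
          = ((∑ x ∈ B, Q m x) - (∑ x ∈ B, Q m' x)) * ED := by ring
        _ ≤ (2/L) * ED := mul_le_mul_of_nonneg_right (by linarith [habs3.2]) hED0
        _ ≤ (2/L) * 1 := mul_le_mul_of_nonneg_left hED1 (by positivity)
        _ = 2/L := mul_one _
    have hfinal : κ - l1 ≤ l2 + δ/4 + δ/4 + δ/4 := by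
      have s1 : κ - l1 ≤ ∑ x ∈ B, Q m x * ∑ y ∈ D m, Wn W n x y := by linarith
      have s2 : ∑ x ∈ B, Q m x * ∑ y ∈ D m, Wn W n x y
          ≤ (∑ x ∈ B, Q m x) * ED + δ/4 := by linarith [habs1.2]
      have s3 : (∑ x ∈ B, Q m x) * ED ≤ (∑ x ∈ B, Q m' x) * ED + δ/4 := by
        linarith [hEDdiff, hLbd]
      have s4 : (∑ x ∈ B, Q m' x) * ED
          ≤ (∑ x ∈ B, Q m' x * ∑ y ∈ D m, Wn W n x y) + δ/4 := by linarith [habs2.1]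
      linarith
    rw [hδ] at hδpos hfinal
    linarith
  -- cardinality bound
  have hcard := Finset.card_le_card_of_injOn F (fun m _ => Finset.mem_univ (F m)) hinj
  calc (Finset.univ.filter (fun m => κ ≤ ∑ x ∈ B, Q m x)).card
      ≤ (Finset.univ : Finset (Fin (L+1) × (Fin M → (Fin n → X)))).card := hcard
    _ = (L+1) * (Fintype.card X)^(n*M) := by
        simp [Fintype.card_prod, Fintype.card_fun, pow_mul]

end Chunk5
section Chunk6

open Filter

lemma ev_poly_exp (d : ℕ) (c : ℝ) (hc : 0 < c) (η : ℝ) (hη : 0 < η) :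
    ∀ᶠ n : ℕ in Filter.atTop, ((n:ℝ)+1)^d * Real.exp (-(c * n)) ≤ η := by
  have hψ : Tendsto (fun n : ℕ => c * ((n:ℝ)+1)) atTop atTop := by
    apply Tendsto.const_mul_atTop hc
    exact Filter.tendsto_atTop_add_const_right _ 1 tendsto_natCast_atTop_atTop
  have h1 : Tendsto (fun n : ℕ => (c*((n:ℝ)+1))^d * Real.exp (-(c*((n:ℝ)+1)))) atTop (nhds 0) :=
    (Real.tendsto_pow_mul_exp_neg_atTop_nhds_zero d).comp hψ
  have h2 : Tendsto (fun n : ℕ => ((n:ℝ)+1)^d * Real.exp (-(c * n))) atTop (nhds 0) := by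
    have h3 := h1.const_mul (Real.exp c / c^d)
    rw [mul_zero] at h3
    apply h3.congr
    intro n
    have hcne : c ≠ 0 := hc.ne'
    have hexp : Real.exp (-(c*((n:ℝ)+1))) = Real.exp (-(c*n)) * Real.exp (-c) := by
      rw [← Real.exp_add]
      congr 1
      ring
    rw [mul_pow, hexp]
    rw [show Real.exp (-c) = (Real.exp c)⁻¹ from Real.exp_neg c]
    field_simp
  have := h2.eventually_lt_const hη
  exact this.mono fun n h => h.le

lemma tendsto_logsq (a : ℝ) :
    Filter.Tendsto (fun x : ℝ => (Real.log x - a)^2 / x) Filter.atTop (nhds 0) := by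
  have h2 := Real.tendsto_pow_log_div_mul_add_atTop 1 0 2 one_ne_zero
  have h1 := Real.tendsto_pow_log_div_mul_add_atTop 1 0 1 one_ne_zero
  simp only [one_mul, add_zero, pow_one] at h1 h2
  have h0 : Tendsto (fun x : ℝ => a^2 / x) atTop (nhds 0) :=
    tendsto_const_nhds.div_atTop tendsto_id
  have hc := (h2.sub (h1.const_mul (2*a))).add h0
  rw [show (0:ℝ) - 2*a*0 + 0 = 0 by ring] at hc
  apply hc.congr
  intro x
  rw [show (Real.log x - a)^2 = (Real.log x)^2 - 2*a*(Real.log x) + a^2 from by ring]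
  rw [add_div, sub_div]
  ring

lemma ev_log_sq (a : ℝ) (η : ℝ) (hη : 0 < η) :
    ∀ᶠ n : ℕ in Filter.atTop, (Real.log n - a)^2 / n ≤ η := by
  have h := (tendsto_logsq a).comp tendsto_natCast_atTop_atTop
  have := h.eventually_lt_const hη
  exact this.mono fun n hn => hn.le

lemma ev_linear_exp (A c : ℝ) (hc : 0 < c) :
    ∀ᶠ n : ℕ in Filter.atTop, A * n ≤ Real.exp (c * n) := by
  have hψ : Tendsto (fun n : ℕ => c * (n:ℝ)) atTop atTop :=
    Tendsto.const_mul_atTop hc tendsto_natCast_atTop_atTop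
  have h1 : Tendsto (fun n : ℕ => Real.exp (c*(n:ℝ)) / (c*(n:ℝ))^1) atTop atTop :=
    (Real.tendsto_exp_div_pow_atTop 1).comp hψ
  simp only [pow_one] at h1
  have h2 := h1.eventually_ge_atTop ((|A|+1)/c)
  filter_upwards [h2, Filter.eventually_ge_atTop 1] with n hn hn1
  have hn1' : (1:ℝ) ≤ (n:ℝ) := by exact_mod_cast hn1
  have hcn : 0 < c * (n:ℝ) := by positivity
  rw [le_div_iff₀ hcn] at hn
  have habs : A ≤ |A| + 1 := by have := le_abs_self A; linarith
  have he : (|A|+1)/c * (c * (n:ℝ)) = (|A|+1) * (n:ℝ) := by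
    rw [div_mul_eq_mul_div, mul_div_assoc, mul_comm c, mul_div_assoc, div_self hc.ne', mul_one]
  calc A * n ≤ (|A|+1) * (n:ℝ) := mul_le_mul_of_nonneg_right habs (by positivity)
    _ ≤ Real.exp (c * n) := by rw [← he]; exact hn

end Chunk6

set_option maxHeartbeats 8000000 in
/-- **Lemma 3.** For every DMC `W`, rate `R ≥ 0`, and positive
`λ₁, λ₂, ε, κ` with `λ₁ + λ₂ < κ < 1`, for all large enough blocklengths `n`
every `(n, ℳ, λ₁, λ₂)` ID code with `|ℳ| = ⌈exp(exp(nR))⌉` places, on average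
over the messages, mass more than `1 - κ - exp(e^{n(R-ε/2)})/exp(e^{nR})` on
sequences `𝐱` with `I(P_𝐱, W) > R - ε`. -/
theorem avg_mass_on_high_mutinf_types
    {X Y : Type} [Fintype X] [Fintype Y] [Nonempty X] [Nonempty Y]
    (W : X → Y → ℝ) (hW : IsChannel W)
    (R : ℝ) (hR : 0 ≤ R)
    (l1 l2 ε κ : ℝ) (h1 : 0 < l1) (h2 : 0 < l2) (hε : 0 < ε) (hκ0 : 0 < κ)
    (hsum : l1 + l2 < κ) (hκ1 : κ < 1) :
    ∃ η₀ : ℕ, ∀ n : ℕ, η₀ ≤ n →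
      ∀ k : ℕ, k = Nat.ceil (Real.exp (Real.exp (n * R))) →
        ∀ (Q : Fin k → (Fin n → X) → ℝ) (D : Fin k → Finset (Fin n → Y)),
          IsIDCode n W Q D l1 l2 →
          1 - κ - Real.exp (Real.exp (n * (R - ε / 2))) / Real.exp (Real.exp (n * R))
            < (k : ℝ)⁻¹ *
              ∑ m, ∑ x ∈ Finset.univ.filter (fun x => R - ε < mutInf (empType n x) W),
                Q m x := by
  classical
  by_cases hRε : R < ε
  · -- trivial case : all sequences have I(P_x,W) ≥ 0 > R - ε
    refine ⟨1, ?_⟩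
    intro n hn1 k hk Q D hcode
    have hn0 : 0 < n := hn1
    have hkpos : 0 < k := by
      rw [hk, Nat.ceil_pos]
      exact Real.exp_pos _
    have hK : (0:ℝ) < k := by exact_mod_cast hkpos
    have hfilter : Finset.univ.filter
        (fun x : Fin n → X => R - ε < mutInf (empType n x) W) = Finset.univ := by
      apply Finset.filter_true_of_mem
      intro x _
      have := mutInf_nonneg W hW (empType_isPMF hn0 x)
      linarith
    rw [hfilter]
    have hsum1 : ∑ m : Fin k, ∑ x, Q m x = (k:ℝ) := by
      rw [Finset.sum_congr rfl (fun m _ => (hcode.1 m).2)]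
      simp
    rw [hsum1, inv_mul_cancel₀ hK.ne']
    have hpos : 0 < Real.exp (Real.exp (n * (R - ε / 2))) / Real.exp (Real.exp (n * R)) := by
      positivity
    linarith
  · push_neg at hRε  -- now ε ≤ R
    set δ := κ - l1 - l2 with hδdef
    have hδpos : 0 < δ := by rw [hδdef]; linarith
    set L := ⌈(8:ℝ)/δ⌉₊ with hLdef
    have hL : (8:ℝ)/δ ≤ L := Nat.le_ceil _
    set d := Fintype.card X with hddef
    have hd1 : 1 ≤ d := Fintype.card_pos
    have hd1' : (1:ℝ) ≤ (d:ℝ) := by exact_mod_cast hd1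
    have hlogd : 0 ≤ Real.log d := Real.log_nonneg hd1'
    have hev1 : ∀ᶠ n : ℕ in Filter.atTop,
        ((n:ℝ)+1)^d * Real.exp (-(ε/8 * n)) ≤ (δ/8)^2 :=
      ev_poly_exp d (ε/8) (by positivity) _ (by positivity)
    have hev2 : ∀ᶠ n : ℕ in Filter.atTop,
        (Real.log n - Real.log (wm W))^2 / n ≤ (δ/8) * (ε/8)^2 / 8 :=
      ev_log_sq _ _ (by positivity)
    have hev3 : ∀ᶠ n : ℕ in Filter.atTop,
        (Real.log ((L:ℝ)+1) + 2 * Real.log d) * n ≤ Real.exp (ε/4 * n) :=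
      ev_linear_exp _ _ (by positivity)
    have hev4 : ∀ᶠ n : ℕ in Filter.atTop, 1 ≤ n := Filter.eventually_ge_atTop 1
    obtain ⟨η₀, hη⟩ := Filter.eventually_atTop.1 (((hev1.and hev2).and hev3).and hev4)
    refine ⟨η₀, ?_⟩
    intro n hn k hk Q D hcode
    obtain ⟨⟨⟨hc1, hc2⟩, hc3⟩, hc4⟩ := hη n hn
    have hn0 : 0 < n := hc4
    have hn' : (0:ℝ) < n := by exact_mod_cast hn0
    set Mn := ⌈Real.exp ((n:ℝ) * (R - 3*ε/4))⌉₊ with hMdef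
    have hMpos : 0 < Mn := Nat.ceil_pos.2 (Real.exp_pos _)
    have hM' : (0:ℝ) < Mn := by exact_mod_cast hMpos
    set γn := (n:ℝ)*(R-ε) + (n:ℝ)*(ε/8) with hγdef
    set tn := (n:ℝ)*(ε/8) with htdef
    have htn : 0 < tn := by rw [htdef]; positivity
    -- soft covering error bound
    have hsqrt : Real.sqrt (Real.exp γn * (Tset X n).card / Mn) ≤ δ/8 := by
      have hMge : Real.exp ((n:ℝ)*(R-3*ε/4)) ≤ (Mn:ℝ) := Nat.le_ceil _
      have hT : ((Tset X n).card:ℝ) ≤ ((n:ℝ)+1)^d := card_Tset_le hn0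
      have hTnn : (0:ℝ) ≤ ((Tset X n).card:ℝ) := by positivity
      have harg : Real.exp γn * (Tset X n).card / Mn
          ≤ ((n:ℝ)+1)^d * Real.exp (-(ε/8 * n)) := by
        calc Real.exp γn * (Tset X n).card / Mn
            ≤ Real.exp γn * ((n:ℝ)+1)^d / Mn := by gcongr
          _ ≤ Real.exp γn * ((n:ℝ)+1)^d / Real.exp ((n:ℝ)*(R-3*ε/4)) :=
              div_le_div_of_nonneg_left (by positivity) (Real.exp_pos _) hMge
          _ = ((n:ℝ)+1)^d * Real.exp (-(ε/8 * n)) := by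
              rw [mul_comm (Real.exp γn), mul_div_assoc, ← Real.exp_sub]
              congr 1
              rw [hγdef, htdef]
              ring
      calc Real.sqrt (Real.exp γn * (Tset X n).card / Mn)
          ≤ Real.sqrt ((δ/8)^2) := Real.sqrt_le_sqrt (le_trans harg hc1)
        _ = δ/8 := Real.sqrt_sq (by positivity)
    have h2nd : 2*((n:ℝ)*(2*Bn W n)^2/tn^2) ≤ δ/8 := by
      have hiden : 2*((n:ℝ)*(2*Bn W n)^2/tn^2)
          = (8/(ε/8)^2) * ((Bn W n)^2/(n:ℝ)) := by
        rw [htdef]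
        field_simp
        ring
      rw [hiden]
      have hc2' : (Bn W n)^2/(n:ℝ) ≤ (δ/8) * (ε/8)^2 / 8 := hc2
      calc (8/(ε/8)^2) * ((Bn W n)^2/(n:ℝ))
          ≤ (8/(ε/8)^2) * ((δ/8) * (ε/8)^2 / 8) :=
            mul_le_mul_of_nonneg_left hc2' (by positivity)
        _ = δ/8 := by field_simp
    have hscfull : Real.sqrt (Real.exp γn * (Tset X n).card / Mn)
        + 2 * ((n : ℝ) * (2 * Bn W n)^2 / tn^2) ≤ δ/4 := by linarith
    -- count bound vs double exponential
    have hcount : ((L:ℝ)+1) * (d:ℝ)^(n*Mn) ≤ Real.exp (Real.exp ((n:ℝ)*(R-ε/2))) := by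
      set S := Real.exp ((n:ℝ)*(R-3*ε/4)) with hSdef
      have hS1 : 1 ≤ S := Real.one_le_exp (by nlinarith)
      have hMle : (Mn:ℝ) ≤ 2*S := by
        have h := Nat.ceil_lt_add_one (le_of_lt (Real.exp_pos ((n:ℝ)*(R-3*ε/4))))
        rw [hMdef]
        rw [hSdef]
        linarith
      have hL1 : (0:ℝ) < (L:ℝ)+1 := by positivity
      have hlogL : 0 ≤ Real.log ((L:ℝ)+1) := Real.log_nonneg (by linarith)
      have hdpow : ((d:ℝ))^(n*Mn) = Real.exp ((((n*Mn) : ℕ):ℝ) * Real.log d) := by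
        rw [Real.exp_nat_mul, Real.exp_log (by linarith : (0:ℝ) < (d:ℝ))]
      have hkey : Real.log ((L:ℝ)+1) + (((n*Mn) : ℕ):ℝ) * Real.log d
          ≤ Real.exp ((n:ℝ)*(R-ε/2)) := by
        have hcast : (((n*Mn) : ℕ):ℝ) = (n:ℝ)*(Mn:ℝ) := by push_cast; ring
        rw [hcast]
        have hstep1 : (n:ℝ)*(Mn:ℝ)*Real.log d ≤ 2*(n:ℝ)*S*Real.log d := by
          have : (n:ℝ)*(Mn:ℝ) ≤ (n:ℝ)*(2*S) := by nlinarith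
          nlinarith
        have hn1' : (1:ℝ) ≤ (n:ℝ) := by exact_mod_cast hc4
        have hab : Real.log ((L:ℝ)+1) + 2*Real.log d*(n:ℝ)
            ≤ (Real.log ((L:ℝ)+1) + 2 * Real.log d) * n := by nlinarith
        have hexp1 : Real.log ((L:ℝ)+1) + 2*(n:ℝ)*S*Real.log d
            ≤ S * (Real.log ((L:ℝ)+1) + 2*Real.log d*(n:ℝ)) := by nlinarith
        have hfin : S * (Real.log ((L:ℝ)+1) + 2*Real.log d*(n:ℝ))
            ≤ S * Real.exp (ε/4*(n:ℝ)) := by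
          apply mul_le_mul_of_nonneg_left ?_ (by linarith)
          calc Real.log ((L:ℝ)+1) + 2*Real.log d*(n:ℝ)
              ≤ (Real.log ((L:ℝ)+1) + 2 * Real.log d) * n := hab
            _ ≤ Real.exp (ε/4 * n) := hc3
        have hSexp : S * Real.exp (ε/4*(n:ℝ)) = Real.exp ((n:ℝ)*(R-ε/2)) := by
          rw [hSdef, ← Real.exp_add]
          congr 1
          ring
        nlinarith
      calc ((L:ℝ)+1) * (d:ℝ)^(n*Mn)
          = Real.exp (Real.log ((L:ℝ)+1) + (((n*Mn) : ℕ):ℝ) * Real.log d) := by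
            rw [Real.exp_add, Real.exp_log hL1, hdpow]
        _ ≤ Real.exp (Real.exp ((n:ℝ)*(R-ε/2))) := Real.exp_le_exp.2 hkey
    -- the bad set and its cardinality
    set Bset := Finset.univ.filter
      (fun x : Fin n → X => ¬ (R - ε < mutInf (empType n x) W)) with hBdef
    have hB : ∀ x ∈ Bset, (n:ℝ) * mutInf (empType n x) W + tn ≤ γn := by
      intro x hx
      rw [hBdef, Finset.mem_filter] at hx
      have hI : mutInf (empType n x) W ≤ R - ε := not_lt.1 hx.2
      have : (n:ℝ) * mutInf (empType n x) W ≤ (n:ℝ) * (R - ε) :=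
        mul_le_mul_of_nonneg_left hI (le_of_lt hn')
      rw [hγdef, htdef]
      linarith
    have hbadcard := bad_count W hW hn0 Q D l1 l2 κ δ hcode hκ0 hδdef hδpos L hL
      hMpos γn tn htn Bset hB hscfull
    -- real versions
    have hKge : Real.exp (Real.exp ((n:ℝ) * R)) ≤ (k:ℝ) := by
      rw [hk]
      exact Nat.le_ceil _
    have hKpos : (0:ℝ) < k := lt_of_lt_of_le (Real.exp_pos _) hKge
    set N₀ := Real.exp (Real.exp ((n:ℝ)*(R-ε/2))) with hN₀def
    set bad := Finset.univ.filter (fun m : Fin k => κ ≤ ∑ x ∈ Bset, Q m x) with hbaddef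
    have hbc : (bad.card : ℝ) ≤ N₀ := by
      calc (bad.card : ℝ) ≤ (((L+1) * d^(n*Mn) : ℕ) : ℝ) := by exact_mod_cast hbadcard
        _ = ((L:ℝ)+1) * (d:ℝ)^(n*Mn) := by push_cast; ring
        _ ≤ N₀ := hcount
    -- lower bound on total good mass
    have hQnn : ∀ (m : Fin k) (x : Fin n → X), 0 ≤ Q m x := fun m x => (hcode.1 m).1 x
    have hgood : ∀ m : Fin k, ¬ (κ ≤ ∑ x ∈ Bset, Q m x) →
        1 - κ ≤ ∑ x ∈ Finset.univ.filter
          (fun x => R - ε < mutInf (empType n x) W), Q m x := by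
      intro m hm
      push_neg at hm
      have hAB : (∑ x ∈ Finset.univ.filter
          (fun x => R - ε < mutInf (empType n x) W), Q m x) + (∑ x ∈ Bset, Q m x) = 1 := by
        rw [hBdef]
        rw [Finset.sum_filter_add_sum_filter_not]
        exact (hcode.1 m).2
      linarith
    have hbadk : bad.card ≤ k := by
      calc bad.card ≤ (Finset.univ : Finset (Fin k)).card := Finset.card_le_card (Finset.filter_subset _ _)
        _ = k := by simp
    have hbadk' : bad.card ≤ Fintype.card (Fin k) := Finset.card_le_univ bad
    have hsum_ge : ((k:ℝ) - bad.card) * (1 - κ)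
        ≤ ∑ m, ∑ x ∈ Finset.univ.filter
          (fun x => R - ε < mutInf (empType n x) W), Q m x := by
      have hsplitm := Finset.sum_add_sum_compl bad
        (fun m => ∑ x ∈ Finset.univ.filter
          (fun x => R - ε < mutInf (empType n x) W), Q m x)
      have hterm1 : 0 ≤ ∑ m ∈ bad, ∑ x ∈ Finset.univ.filter
          (fun x => R - ε < mutInf (empType n x) W), Q m x :=
        Finset.sum_nonneg fun m _ => Finset.sum_nonneg fun x _ => hQnn m x
      have hcardc : ((badᶜ : Finset (Fin k)).card : ℝ) = (k:ℝ) - bad.card := by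
        rw [Finset.card_compl]
        rw [Nat.cast_sub hbadk']
        simp
      have hterm2 : ((k:ℝ) - bad.card) * (1 - κ)
          ≤ ∑ m ∈ (badᶜ : Finset (Fin k)), ∑ x ∈ Finset.univ.filter
            (fun x => R - ε < mutInf (empType n x) W), Q m x := by
        calc ((k:ℝ) - bad.card) * (1 - κ)
            = ∑ _m ∈ (badᶜ : Finset (Fin k)), (1 - κ) := by
              rw [Finset.sum_const, nsmul_eq_mul, hcardc]
          _ ≤ _ := by
              apply Finset.sum_le_sum
              intro m hm
              apply hgood m
              intro hcon
              exact (Finset.mem_compl.1 hm) (Finset.mem_filter.2 ⟨Finset.mem_univ m, hcon⟩)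
      linarith [hsplitm]
    -- final chain
    have hbc0 : (0:ℝ) ≤ bad.card := Nat.cast_nonneg _
    have hN₀pos : 0 < N₀ := Real.exp_pos _
    have hEbig : 0 < Real.exp (Real.exp ((n:ℝ) * R)) := Real.exp_pos _
    have hdivle : N₀ / (k:ℝ) ≤ N₀ / Real.exp (Real.exp ((n:ℝ) * R)) := by
      apply div_le_div_of_nonneg_left hN₀pos.le hEbig hKge
    have hstep1 : 1 - κ - N₀ / Real.exp (Real.exp ((n:ℝ) * R)) ≤ 1 - κ - N₀/(k:ℝ) := by
      linarith
    have hstep2 : 1 - κ - N₀/(k:ℝ) < (1 - N₀/(k:ℝ)) * (1 - κ) := by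
      have hq : 0 < κ * (N₀/(k:ℝ)) := mul_pos hκ0 (div_pos hN₀pos hKpos)
      nlinarith
    have hstep3 : (1 - N₀/(k:ℝ)) * (1 - κ) ≤ (1 - (bad.card:ℝ)/(k:ℝ)) * (1 - κ) := by
      apply mul_le_mul_of_nonneg_right ?_ (by linarith)
      have : (bad.card:ℝ)/(k:ℝ) ≤ N₀/(k:ℝ) :=
        div_le_div_of_nonneg_right hbc hKpos.le |>.trans_eq rfl
      linarith
    have hstep4 : (1 - (bad.card:ℝ)/(k:ℝ)) * (1 - κ)
        ≤ (k:ℝ)⁻¹ * ∑ m, ∑ x ∈ Finset.univ.filter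
          (fun x => R - ε < mutInf (empType n x) W), Q m x := by
      have he : (1 - (bad.card:ℝ)/(k:ℝ)) * (1 - κ)
          = (k:ℝ)⁻¹ * (((k:ℝ) - bad.card) * (1 - κ)) := by
        field_simp
      rw [he]
      exact mul_le_mul_of_nonneg_left hsum_ge (by positivity)
    calc 1 - κ - N₀ / Real.exp (Real.exp ((n:ℝ) * R))
        ≤ 1 - κ - N₀/(k:ℝ) := hstep1
      _ < (1 - N₀/(k:ℝ)) * (1 - κ) := hstep2
      _ ≤ (1 - (bad.card:ℝ)/(k:ℝ)) * (1 - κ) := hstep3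
      _ ≤ _ := hstep4
end
end

section
/- (Key total-variation claim in the proof of Claim 2, inequality (69) of the paper.) In the random BC code construction described in the context, there exists τ > 0 such that the probability that max_{m_𝒴∈ℳ_𝒴} d(P_V^{(m_𝒴)}, P̃_V^{(m_𝒴)}) ≥ e^{−nτ} converges to zero as the blocklength n tends to infinity. -/
open scoped Classical
open Finset

noncomputable section

/-- Number of ID messages: `⌈exp(exp(nR))⌉`. -/
def Kmsg (R : ℝ) (n : ℕ) : ℕ := Nat.ceil (Real.exp (Real.exp (n * R)))

/-- Size of the pool index set: `⌈e^{n R_pool}⌉`. -/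
def Kpool (Rpool : ℝ) (n : ℕ) : ℕ := Nat.ceil (Real.exp (n * Rpool))

/-- Probability, under independent Bernoulli(p) selection of each pair `(a,b)`,
of the outcome `ω : A → B → Bool`. -/
def bernWeight {A B : Type*} [Fintype A] [Fintype B] (p : ℝ) (ω : A → B → Bool) : ℝ :=
  ∏ a, ∏ b, if ω a b then p else 1 - p

/-- The (random) index set `V_a ⊆ B` determined by the outcome `ω`. -/
def idxSet {A B : Type*} [Fintype B] (ω : A → B → Bool) (a : A) : Finset B :=
  Finset.univ.filter (fun b => ω a b = true)

/-- The fixed pool index `v*`. -/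
def vstar (Rpool : ℝ) (n : ℕ) : Fin (Kpool Rpool n) :=
  ⟨0, Nat.ceil_pos.mpr (Real.exp_pos _)⟩

/-- An outcome of the random BC code construction: the index sets
`{V_{m_Y}}`, the index sets `{V_{m_Z}}`, and the codeword indices
`{V_{m_Y, m_Z}}`. -/
abbrev BCOutcome (RY RZ Rpool : ℝ) (n : ℕ) : Type :=
  (Fin (Kmsg RY n) → Fin (Kpool Rpool n) → Bool)
  × (Fin (Kmsg RZ n) → Fin (Kpool Rpool n) → Bool)
  × (Fin (Kmsg RY n) → Fin (Kmsg RZ n) → Fin (Kpool Rpool n))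

/-- Probability of the outcome `ω`: the index sets are chosen by independent
Bernoulli selections with parameters `e^{-n(R_pool - R̃_Y)}` and
`e^{-n(R_pool - R̃_Z)}`; and, conditionally on them and independently across
message pairs, `V_{m_Y,m_Z}` is uniform on `V_{m_Y} ∩ V_{m_Z}` if this
intersection is nonempty, and uniform on the whole pool otherwise. -/
def bcWeight (RY RZ RtY RtZ Rpool : ℝ) (n : ℕ) (ω : BCOutcome RY RZ Rpool n) : ℝ :=
  bernWeight (Real.exp (-(n * (Rpool - RtY)))) ω.1 *
  bernWeight (Real.exp (-(n * (Rpool - RtZ)))) ω.2.1 *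
  ∏ my, ∏ mz,
    (if (idxSet ω.1 my ∩ idxSet ω.2.1 mz).Nonempty then
      (if ω.2.2 my mz ∈ idxSet ω.1 my ∩ idxSet ω.2.1 mz then
        ((idxSet ω.1 my ∩ idxSet ω.2.1 mz).card : ℝ)⁻¹ else 0)
    else ((Kpool Rpool n : ℕ) : ℝ)⁻¹)

/-- The PMF `P_V^{(m_Y)}` on the pool indices: the distribution of
`V_{m_Y, M_Z}` with `M_Z` uniform. -/
def PVmy (RY RZ Rpool : ℝ) (n : ℕ) (ω : BCOutcome RY RZ Rpool n)
    (my : Fin (Kmsg RY n)) (v : Fin (Kpool Rpool n)) : ℝ :=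
  ((Kmsg RZ n : ℕ) : ℝ)⁻¹ * ∑ mz, if ω.2.2 my mz = v then 1 else 0

/-- The PMF `P̃_V^{(m_Y)}`: uniform on `V_{m_Y}` if nonempty, else the point
mass at `v*`. -/
def PtildeVmy (RY RZ Rpool : ℝ) (n : ℕ) (ω : BCOutcome RY RZ Rpool n)
    (my : Fin (Kmsg RY n)) (v : Fin (Kpool Rpool n)) : ℝ :=
  if (idxSet ω.1 my).Nonempty then
    (if v ∈ idxSet ω.1 my then ((idxSet ω.1 my).card : ℝ)⁻¹ else 0)
  else (if v = vstar Rpool n then 1 else 0)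

/-- Total-variation distance between PMFs on a finite type. -/
def tvDist {V : Type*} [Fintype V] (p q : V → ℝ) : ℝ :=
  (1 / 2) * ∑ v, |p v - q v|

namespace BCAux


lemma sum_fn_prod {I S : Type*} [Fintype I] [Fintype S] [DecidableEq I] (h : I → S → ℝ) :
    ∑ f : I → S, ∏ i, h i (f i) = ∏ i, ∑ s, h i s := by
  rw [Finset.prod_univ_sum, Fintype.piFinset_univ]

lemma collapse {M S : Type*} [Fintype M] [Fintype S] [DecidableEq M]
    (G : M → S → ℝ) (Φ : S → ℝ) (my : M) (hG : ∀ m, m ≠ my → ∑ s, G m s = 1) :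
    ∑ f : M → S, (∏ m, G m (f m)) * Φ (f my) = ∑ s, G my s * Φ s := by
  have e1 : ∀ f : M → S, (∏ m, G m (f m)) * Φ (f my)
      = ∏ m, (G m (f m) * (if m = my then Φ (f m) else 1)) := by
    intro f
    rw [Finset.prod_mul_distrib, Finset.prod_ite_eq' Finset.univ my (fun m => Φ (f m))]
    simp
  simp_rw [e1]
  rw [sum_fn_prod (fun m s => G m s * (if m = my then Φ s else 1))]
  have e2 : ∀ m, (∑ s, G m s * (if m = my then Φ s else 1))
      = if m = my then (∑ s, G my s * Φ s) else 1 := by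
    intro m; by_cases h : m = my
    · subst h; simp
    · simp only [if_neg h, mul_one]; rw [hG m h]
  rw [Finset.prod_congr rfl (fun m _ => e2 m), Finset.prod_ite_eq' Finset.univ my
    (fun _ => ∑ s, G my s * Φ s)]
  simp

lemma chernoff {I S : Type*} [Fintype I] [Fintype S] [DecidableEq I]
    (μ : S → ℝ) (hμ0 : ∀ s, 0 ≤ μ s) (g : S → ℝ) {t : ℝ} (ht : 0 ≤ t) (c : ℝ) :
    ∑ f : I → S, (∏ i, μ (f i)) * (if c ≤ ∑ i, g (f i) then (1:ℝ) else 0)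
      ≤ Real.exp (-(t*c)) * (∑ s, μ s * Real.exp (t * g s)) ^ (Fintype.card I) := by
  have key : ∀ f : I → S, (∏ i, μ (f i)) * (if c ≤ ∑ i, g (f i) then (1:ℝ) else 0)
      ≤ Real.exp (-(t*c)) * ∏ i, (μ (f i) * Real.exp (t * g (f i))) := by
    intro f
    have hprod : (0:ℝ) ≤ ∏ i, μ (f i) := Finset.prod_nonneg fun i _ => hμ0 _
    have hre : Real.exp (-(t*c)) * ∏ i, (μ (f i) * Real.exp (t * g (f i)))
        = (∏ i, μ (f i)) * (Real.exp (-(t*c)) * Real.exp (t * ∑ i, g (f i))) := by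
      rw [Finset.prod_mul_distrib, Finset.mul_sum, Real.exp_sum]
      ring
    rw [hre]
    by_cases hc : c ≤ ∑ i, g (f i)
    · rw [if_pos hc]
      have h1 : (1:ℝ) ≤ Real.exp (-(t*c)) * Real.exp (t * ∑ i, g (f i)) := by
        rw [← Real.exp_add]
        have h2 : 0 ≤ -(t*c) + t * ∑ i, g (f i) := by nlinarith
        exact Real.one_le_exp h2
      nlinarith
    · rw [if_neg hc, mul_zero]
      positivity
  calc ∑ f : I → S, (∏ i, μ (f i)) * (if c ≤ ∑ i, g (f i) then (1:ℝ) else 0)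
      ≤ ∑ f : I → S, Real.exp (-(t*c)) * ∏ i, (μ (f i) * Real.exp (t * g (f i))) :=
        Finset.sum_le_sum fun f _ => key f
    _ = Real.exp (-(t*c)) * ∑ f : I → S, ∏ i, (μ (f i) * Real.exp (t * g (f i))) := by
        rw [Finset.mul_sum]
    _ = Real.exp (-(t*c)) * (∑ s, μ s * Real.exp (t * g s)) ^ (Fintype.card I) := by
        rw [sum_fn_prod (fun _ s => μ s * Real.exp (t * g s))]
        rw [Finset.prod_const, Finset.card_univ]

lemma exp_le_quad {x : ℝ} (hx : |x| ≤ 1) : Real.exp x ≤ 1 + x + (3/4)*x^2 := by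
  have h := Real.exp_bound hx (n := 3) (by norm_num)
  have hs : ∑ m ∈ Finset.range 3, x ^ m / (m.factorial : ℝ) = 1 + x + x^2/2 := by
    simp [Finset.sum_range_succ, Nat.factorial]
    try ring
  rw [hs] at h
  have h2 := (abs_le.mp h).2
  have h3 : |x|^3 ≤ x^2 := by
    have : |x|^3 = |x| * |x|^2 := by ring
    rw [this, sq_abs]
    nlinarith [abs_nonneg x, sq_nonneg x]
  have h4 : |x| ^ 3 * ((Nat.succ 3 : ℝ) / ((Nat.factorial 3 : ℝ) * (3:ℕ))) ≤ x^2 * (4/18) := by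
    have : ((Nat.succ 3 : ℝ) / ((Nat.factorial 3 : ℝ) * (3:ℕ))) = 4/18 := by
      norm_num [Nat.factorial]
    rw [this]
    nlinarith [abs_nonneg x]
  nlinarith

lemma mgf_indicator {S : Type*} [Fintype S] [DecidableEq S] (μ : S → ℝ) (v : S) (u : ℝ) :
    ∑ s, μ s * Real.exp (u * (if s = v then (1:ℝ) else 0))
      = (∑ s, μ s) + μ v * (Real.exp u - 1) := by
  have e : ∀ s, μ s * Real.exp (u * (if s = v then (1:ℝ) else 0))
      = μ s + (if s = v then μ v * (Real.exp u - 1) else 0) := by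
    intro s; by_cases h : s = v
    · subst h; simp [mul_one]; ring
    · simp [h]
  rw [Finset.sum_congr rfl (fun s _ => e s), Finset.sum_add_distrib,
    Finset.sum_ite_eq' Finset.univ v (fun _ => μ v * (Real.exp u - 1))]
  simp


lemma tail_upper {I S : Type*} [Fintype I] [Fintype S] [DecidableEq I] [DecidableEq S]
    (μ : S → ℝ) (hμ0 : ∀ s, 0 ≤ μ s) (hμ1 : ∑ s, μ s = 1) (v : S) {η : ℝ}
    (hη0 : 0 < η) (hη1 : η ≤ 1) :
    ∑ f : I → S, (∏ i, μ (f i)) *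
        (if (Fintype.card I : ℝ) * (μ v + η) ≤ ∑ i, (if f i = v then (1:ℝ) else 0) then (1:ℝ) else 0)
      ≤ Real.exp (-((Fintype.card I : ℝ) * η^2 / 4)) := by
  set q := μ v with hq
  have hq0 : 0 ≤ q := hμ0 v
  have hq1 : q ≤ 1 := by
    rw [← hμ1]
    exact Finset.single_le_sum (fun s _ => hμ0 s) (Finset.mem_univ v)
  have ht0 : (0:ℝ) ≤ η/2 := by linarith
  have hch := chernoff (I := I) μ hμ0 (fun s => if s = v then (1:ℝ) else 0) ht0
    ((Fintype.card I : ℝ) * (q + η))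
  refine le_trans hch ?_
  have hmgf : ∑ s, μ s * Real.exp ((η/2) * (if s = v then (1:ℝ) else 0))
      = 1 + q * (Real.exp (η/2) - 1) := by
    rw [mgf_indicator μ v (η/2), hμ1]
  rw [hmgf]
  have hE : Real.exp (η/2) ≤ 1 + η/2 + (3/4)*(η/2)^2 :=
    exp_le_quad (by rw [abs_of_nonneg ht0]; linarith)
  have hE1 : 1 ≤ Real.exp (η/2) := Real.one_le_exp ht0
  have hbase0 : (0:ℝ) ≤ 1 + q * (Real.exp (η/2) - 1) := by nlinarith
  have hpow : (1 + q * (Real.exp (η/2) - 1)) ^ (Fintype.card I)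
      ≤ Real.exp (q * (Real.exp (η/2) - 1)) ^ (Fintype.card I) := by
    apply pow_le_pow_left₀ hbase0
    have := Real.add_one_le_exp (q * (Real.exp (η/2) - 1))
    linarith
  have hNn : (0:ℝ) ≤ (Fintype.card I : ℝ) := Nat.cast_nonneg _
  calc Real.exp (-(η/2 * ((Fintype.card I : ℝ) * (q + η)))) * (1 + q * (Real.exp (η/2) - 1)) ^ (Fintype.card I)
      ≤ Real.exp (-(η/2 * ((Fintype.card I : ℝ) * (q + η)))) * Real.exp (q * (Real.exp (η/2) - 1)) ^ (Fintype.card I) := by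
        apply mul_le_mul_of_nonneg_left hpow (Real.exp_nonneg _)
    _ = Real.exp (-(η/2 * ((Fintype.card I : ℝ) * (q + η))) + (Fintype.card I : ℝ) * (q * (Real.exp (η/2) - 1))) := by
        rw [← Real.exp_nat_mul, ← Real.exp_add]
    _ ≤ Real.exp (-((Fintype.card I : ℝ) * η^2 / 4)) := by
        apply Real.exp_le_exp.mpr
        have hper : q * (Real.exp (η/2) - 1) - (η/2) * (q + η) ≤ -(η^2/4) := by nlinarith
        nlinarith [mul_le_mul_of_nonneg_left hper hNn]

lemma tail_lower {I S : Type*} [Fintype I] [Fintype S] [DecidableEq I] [DecidableEq S]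
    (μ : S → ℝ) (hμ0 : ∀ s, 0 ≤ μ s) (hμ1 : ∑ s, μ s = 1) (v : S) {η : ℝ}
    (hη0 : 0 < η) (hη1 : η ≤ 1) :
    ∑ f : I → S, (∏ i, μ (f i)) *
        (if (∑ i, (if f i = v then (1:ℝ) else 0)) ≤ (Fintype.card I : ℝ) * (μ v - η) then (1:ℝ) else 0)
      ≤ Real.exp (-((Fintype.card I : ℝ) * η^2 / 4)) := by
  set q := μ v with hq
  have hq0 : 0 ≤ q := hμ0 v
  have hq1 : q ≤ 1 := by
    rw [← hμ1]
    exact Finset.single_le_sum (fun s _ => hμ0 s) (Finset.mem_univ v)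
  have ht0 : (0:ℝ) ≤ η/2 := by linarith
  have hev : ∀ f : I → S,
      ((∑ i, (if f i = v then (1:ℝ) else 0)) ≤ (Fintype.card I : ℝ) * (q - η))
      ↔ (-((Fintype.card I : ℝ) * (q - η)) ≤ ∑ i, (fun s => -(if s = v then (1:ℝ) else 0)) (f i)) := by
    intro f
    rw [Finset.sum_neg_distrib]
    constructor <;> intro h <;> linarith
  have hre : ∀ f : I → S, (∏ i, μ (f i)) *
        (if (∑ i, (if f i = v then (1:ℝ) else 0)) ≤ (Fintype.card I : ℝ) * (q - η) then (1:ℝ) else 0)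
      = (∏ i, μ (f i)) *
        (if -((Fintype.card I : ℝ) * (q - η)) ≤ ∑ i, (fun s => -(if s = v then (1:ℝ) else 0)) (f i) then (1:ℝ) else 0) := by
    intro f
    congr 1
    exact if_congr (hev f) rfl rfl
  rw [Finset.sum_congr rfl (fun f _ => hre f)]
  have hch := chernoff (I := I) μ hμ0 (fun s => -(if s = v then (1:ℝ) else 0)) ht0
    (-((Fintype.card I : ℝ) * (q - η)))
  refine le_trans hch ?_
  have hmgf : ∑ s, μ s * Real.exp ((η/2) * (fun s => -(if s = v then (1:ℝ) else 0)) s)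
      = 1 + q * (Real.exp (-(η/2)) - 1) := by
    have : ∀ s, (η/2) * (fun s => -(if s = v then (1:ℝ) else 0)) s
        = (-(η/2)) * (if s = v then (1:ℝ) else 0) := by
      intro s; dsimp only; split_ifs <;> ring
    simp_rw [this]
    rw [mgf_indicator μ v (-(η/2)), hμ1]
  rw [hmgf]
  have hE : Real.exp (-(η/2)) ≤ 1 - η/2 + (3/4)*(η/2)^2 := by
    have := exp_le_quad (x := -(η/2)) (by rw [abs_of_nonpos (by linarith)]; linarith)
    nlinarith [this]
  have hE0 : 0 < Real.exp (-(η/2)) := Real.exp_pos _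
  have hbase0 : (0:ℝ) ≤ 1 + q * (Real.exp (-(η/2)) - 1) := by nlinarith
  have hpow : (1 + q * (Real.exp (-(η/2)) - 1)) ^ (Fintype.card I)
      ≤ Real.exp (q * (Real.exp (-(η/2)) - 1)) ^ (Fintype.card I) := by
    apply pow_le_pow_left₀ hbase0
    have := Real.add_one_le_exp (q * (Real.exp (-(η/2)) - 1))
    linarith
  have hNn : (0:ℝ) ≤ (Fintype.card I : ℝ) := Nat.cast_nonneg _
  calc Real.exp (-(η/2 * -((Fintype.card I : ℝ) * (q - η)))) * (1 + q * (Real.exp (-(η/2)) - 1)) ^ (Fintype.card I)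
      ≤ Real.exp (-(η/2 * -((Fintype.card I : ℝ) * (q - η)))) * Real.exp (q * (Real.exp (-(η/2)) - 1)) ^ (Fintype.card I) := by
        apply mul_le_mul_of_nonneg_left hpow (Real.exp_nonneg _)
    _ = Real.exp (-(η/2 * -((Fintype.card I : ℝ) * (q - η))) + (Fintype.card I : ℝ) * (q * (Real.exp (-(η/2)) - 1))) := by
        rw [← Real.exp_nat_mul, ← Real.exp_add]
    _ ≤ Real.exp (-((Fintype.card I : ℝ) * η^2 / 4)) := by
        apply Real.exp_le_exp.mpr
        have hper : q * (Real.exp (-(η/2)) - 1) + (η/2) * (q - η) ≤ -(η^2/4) := by nlinarith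
        nlinarith [mul_le_mul_of_nonneg_left hper hNn]

lemma tail_binom {I : Type*} [Fintype I] [DecidableEq I] (p : ℝ) (hp0 : 0 ≤ p) (hp1 : p ≤ 1) :
    ∑ f : I → Bool, (∏ i, if f i then p else 1-p) *
      (if (∑ i, (if f i then (1:ℝ) else 0)) ≤ (Fintype.card I : ℝ) * p / 2 then (1:ℝ) else 0)
    ≤ Real.exp (-((1 - Real.log 2)/2 * ((Fintype.card I : ℝ) * p))) := by
  have ht0 : (0:ℝ) ≤ Real.log 2 := Real.log_nonneg (by norm_num)
  have hev : ∀ f : I → Bool,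
      ((∑ i, (if f i then (1:ℝ) else 0)) ≤ (Fintype.card I : ℝ) * p / 2)
      ↔ (-((Fintype.card I : ℝ) * p / 2) ≤ ∑ i, (fun s : Bool => -(if s then (1:ℝ) else 0)) (f i)) := by
    intro f
    rw [Finset.sum_neg_distrib]
    constructor <;> intro h <;> linarith
  have hre : ∀ f : I → Bool, (∏ i, if f i then p else 1-p) *
        (if (∑ i, (if f i then (1:ℝ) else 0)) ≤ (Fintype.card I : ℝ) * p / 2 then (1:ℝ) else 0)
      = (∏ i, (fun s : Bool => if s then p else 1-p) (f i)) *
        (if -((Fintype.card I : ℝ) * p / 2) ≤ ∑ i, (fun s : Bool => -(if s then (1:ℝ) else 0)) (f i) then (1:ℝ) else 0) := by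
    intro f
    congr 1
    exact if_congr (hev f) rfl rfl
  rw [Finset.sum_congr rfl (fun f _ => hre f)]
  have hmu0 : ∀ s : Bool, 0 ≤ (if s then p else 1-p) := by
    intro s; cases s <;> simp <;> linarith
  have hch := chernoff (I := I) (fun s : Bool => if s then p else 1-p) hmu0
    (fun s : Bool => -(if s then (1:ℝ) else 0)) ht0 (-((Fintype.card I : ℝ) * p / 2))
  refine le_trans hch ?_
  have hmgf : ∑ s : Bool, (if s then p else 1-p) * Real.exp (Real.log 2 * (fun s : Bool => -(if s then (1:ℝ) else 0)) s)
      = 1 - p/2 := by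
    rw [Fintype.sum_bool]
    simp only [if_true, Bool.false_eq_true, if_false, mul_one, mul_zero, neg_zero,
      Real.exp_zero, mul_neg]
    rw [Real.exp_neg, Real.exp_log (by norm_num : (0:ℝ) < 2)]
    ring
  rw [hmgf]
  have hbase : (0:ℝ) ≤ 1 - p/2 := by linarith
  have hpow : (1 - p/2) ^ (Fintype.card I) ≤ Real.exp (-(p/2)) ^ (Fintype.card I) := by
    apply pow_le_pow_left₀ hbase
    have := Real.add_one_le_exp (-(p/2))
    linarith
  have hNn : (0:ℝ) ≤ (Fintype.card I : ℝ) := Nat.cast_nonneg _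
  calc Real.exp (-(Real.log 2 * -((Fintype.card I : ℝ) * p / 2))) * (1 - p/2) ^ (Fintype.card I)
      ≤ Real.exp (-(Real.log 2 * -((Fintype.card I : ℝ) * p / 2))) * Real.exp (-(p/2)) ^ (Fintype.card I) := by
        apply mul_le_mul_of_nonneg_left hpow (Real.exp_nonneg _)
    _ = Real.exp (-(Real.log 2 * -((Fintype.card I : ℝ) * p / 2)) + (Fintype.card I : ℝ) * (-(p/2))) := by
        rw [← Real.exp_nat_mul, ← Real.exp_add]
    _ ≤ Real.exp (-((1 - Real.log 2)/2 * ((Fintype.card I : ℝ) * p))) := by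
        apply Real.exp_le_exp.mpr
        ring_nf
        nlinarith [mul_nonneg hNn hp0]


lemma union_bound {Ω I : Type*} [Fintype Ω] [Fintype I] (w : Ω → ℝ) (hw : ∀ ω, 0 ≤ w ω)
    (p : I → Ω → Prop) [∀ i, DecidablePred (p i)] [DecidablePred (fun ω => ∃ i, p i ω)] :
    ∑ ω ∈ Finset.univ.filter (fun ω => ∃ i, p i ω), w ω
      ≤ ∑ i, ∑ ω ∈ Finset.univ.filter (p i), w ω := by
  have hR : ∑ i, ∑ ω ∈ Finset.univ.filter (p i), w ω
      = ∑ ω, ∑ i, (if p i ω then w ω else 0) := by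
    have h1 : ∀ i : I, ∑ ω ∈ Finset.univ.filter (p i), w ω = ∑ ω, (if p i ω then w ω else 0) :=
      fun i => Finset.sum_filter (p i) w
    rw [Finset.sum_congr rfl fun i _ => h1 i, Finset.sum_comm]
  rw [hR, Finset.sum_filter]
  apply Finset.sum_le_sum
  intro ω _
  by_cases h : ∃ i, p i ω
  · rw [if_pos h]
    obtain ⟨i0, hi0⟩ := h
    exact le_trans (le_of_eq (if_pos hi0).symm)
      (Finset.single_le_sum (f := fun i => if p i ω then w ω else 0)
        (fun i _ => by split_ifs; exacts [hw ω, le_refl 0]) (Finset.mem_univ i0))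
  · rw [if_neg h]
    exact Finset.sum_nonneg fun i _ => by split_ifs; exacts [hw ω, le_refl 0]

lemma tvDist_triangle {V : Type*} [Fintype V] (p q r : V → ℝ) :
    tvDist p r ≤ tvDist p q + tvDist q r := by
  unfold tvDist
  rw [← mul_add, ← Finset.sum_add_distrib]
  have : ∀ v, |p v - r v| ≤ |p v - q v| + |q v - r v| := by
    intro v
    have := abs_add_le (p v - q v) (q v - r v)
    simpa using this
  nlinarith [Finset.sum_le_sum (fun v (_ : v ∈ Finset.univ) => this v)]

lemma ev_poly_le_exp (σ : ℝ) (hσ : 0 < σ) (c₀ c₁ : ℝ) :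
    ∀ᶠ n : ℕ in Filter.atTop, c₀ + c₁ * (n:ℝ) ≤ Real.exp ((n:ℝ) * σ) := by
  have hnat : Filter.Tendsto (fun n : ℕ => (n:ℝ)) Filter.atTop Filter.atTop :=
    tendsto_natCast_atTop_atTop
  have hns : Filter.Tendsto (fun n : ℕ => (n:ℝ) * σ) Filter.atTop Filter.atTop :=
    hnat.atTop_mul_const hσ
  have t1 : Filter.Tendsto (fun n : ℕ => Real.exp (-((n:ℝ) * σ))) Filter.atTop (nhds 0) :=
    Real.tendsto_exp_atBot.comp (Filter.tendsto_neg_atBot_iff.mpr hns)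
  have t2 : Filter.Tendsto (fun n : ℕ => ((n:ℝ) * σ) * Real.exp (-((n:ℝ) * σ)))
      Filter.atTop (nhds 0) := by
    have h := (Real.tendsto_pow_mul_exp_neg_atTop_nhds_zero 1).comp hns
    simpa [Function.comp_def] using h
  have t2' : Filter.Tendsto (fun n : ℕ => (n:ℝ) * Real.exp (-((n:ℝ) * σ)))
      Filter.atTop (nhds 0) := by
    have h := t2.const_mul σ⁻¹
    rw [mul_zero] at h
    refine h.congr ?_
    intro n
    field_simp
  have t4 : Filter.Tendsto
      (fun n : ℕ => |c₀| * Real.exp (-((n:ℝ) * σ)) + |c₁| * ((n:ℝ) * Real.exp (-((n:ℝ) * σ))))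
      Filter.atTop (nhds 0) := by
    have h := (t1.const_mul (|c₀|)).add (t2'.const_mul (|c₁|))
    simpa using h
  filter_upwards [t4.eventually_lt_const one_pos] with n hn
  have hE : (0:ℝ) < Real.exp ((n:ℝ)*σ) := Real.exp_pos _
  have hkey : (|c₀| + |c₁| * (n:ℝ)) * Real.exp (-((n:ℝ)*σ)) < 1 := by
    calc (|c₀| + |c₁| * (n:ℝ)) * Real.exp (-((n:ℝ)*σ))
        = |c₀| * Real.exp (-((n:ℝ) * σ)) + |c₁| * ((n:ℝ) * Real.exp (-((n:ℝ) * σ))) := by ring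
      _ < 1 := hn
  have habs : c₀ + c₁ * (n:ℝ) ≤ |c₀| + |c₁| * (n:ℝ) :=
    add_le_add (le_abs_self _) (mul_le_mul_of_nonneg_right (le_abs_self _) (Nat.cast_nonneg _))
  calc c₀ + c₁ * (n:ℝ) ≤ |c₀| + |c₁| * (n:ℝ) := habs
    _ = ((|c₀| + |c₁| * (n:ℝ)) * Real.exp (-((n:ℝ)*σ))) * Real.exp ((n:ℝ)*σ) := by
        rw [mul_assoc, ← Real.exp_add]; simp
    _ ≤ 1 * Real.exp ((n:ℝ)*σ) := mul_le_mul_of_nonneg_right hkey.le hE.le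
    _ = Real.exp ((n:ℝ)*σ) := one_mul _


set_option maxHeartbeats 2000000 in
lemma marg {MY MZ V SB : Type*} [Fintype MY] [Fintype MZ] [Fintype V] [Fintype SB]
    [DecidableEq MY] [DecidableEq MZ] [DecidableEq V] [DecidableEq SB]
    (β1 β2 : SB → ℝ) (w : SB → SB → V → ℝ) (F : SB → (MZ → V) → ℝ)
    (hβ1s : ∑ a, β1 a = 1) (hβ2s : ∑ b, β2 b = 1)
    (hws : ∀ a b, ∑ v, w a b v = 1) (my : MY) :
    ∑ A : MY → SB, ∑ B : MZ → SB, ∑ C : MY → MZ → V,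
      ((∏ m, β1 (A m)) * (∏ m, β2 (B m)) * (∏ m, ∏ mz, w (A m) (B mz) (C m mz))) * F (A my) (C my)
    = ∑ a, β1 a * ∑ c : MZ → V, (∏ mz, (∑ b, β2 b * w a b (c mz))) * F a c := by
  have hA : ∀ (A : MY → SB) (B : MZ → SB),
      ∑ C : MY → MZ → V, (∏ m, ∏ mz, w (A m) (B mz) (C m mz)) * F (A my) (C my)
        = ∑ c : MZ → V, (∏ mz, w (A my) (B mz) (c mz)) * F (A my) c := by
    intro A B
    exact collapse (fun m c => ∏ mz, w (A m) (B mz) (c mz)) (fun c => F (A my) c) my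
      (fun m _ => by
        rw [sum_fn_prod (fun mz (vv : V) => w (A m) (B mz) vv)]
        exact Finset.prod_eq_one (fun mz _ => hws (A m) (B mz)))
  have h1 : ∀ (A : MY → SB) (B : MZ → SB),
      ∑ C : MY → MZ → V,
        ((∏ m, β1 (A m)) * (∏ m, β2 (B m)) * (∏ m, ∏ mz, w (A m) (B mz) (C m mz))) * F (A my) (C my)
      = (∏ m, β1 (A m)) * ((∏ m, β2 (B m)) *
          (∑ c : MZ → V, (∏ mz, w (A my) (B mz) (c mz)) * F (A my) c)) := by
    intro A B
    rw [← hA A B, Finset.mul_sum, Finset.mul_sum]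
    exact Finset.sum_congr rfl fun C _ => by ring
  have h2 : ∀ A : MY → SB,
      ∑ B : MZ → SB, (∏ m, β2 (B m)) * (∑ c : MZ → V, (∏ mz, w (A my) (B mz) (c mz)) * F (A my) c)
      = ∑ c : MZ → V, (∏ mz, ∑ b, β2 b * w (A my) b (c mz)) * F (A my) c := by
    intro A
    have e : ∀ B : MZ → SB, (∏ m, β2 (B m)) * (∑ c : MZ → V, (∏ mz, w (A my) (B mz) (c mz)) * F (A my) c)
        = ∑ c : MZ → V, (∏ mz, (β2 (B mz) * w (A my) (B mz) (c mz))) * F (A my) c := by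
      intro B
      rw [Finset.mul_sum]
      refine Finset.sum_congr rfl fun c _ => ?_
      rw [Finset.prod_mul_distrib]
      ring
    simp_rw [e]
    rw [Finset.sum_comm]
    refine Finset.sum_congr rfl fun c _ => ?_
    rw [← Finset.sum_mul, sum_fn_prod (fun mz b => β2 b * w (A my) b (c mz))]
  calc ∑ A : MY → SB, ∑ B : MZ → SB, ∑ C : MY → MZ → V,
      ((∏ m, β1 (A m)) * (∏ m, β2 (B m)) * (∏ m, ∏ mz, w (A m) (B mz) (C m mz))) * F (A my) (C my)
      = ∑ A : MY → SB, (∏ m, β1 (A m)) *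
          ∑ B : MZ → SB, (∏ m, β2 (B m)) *
            (∑ c : MZ → V, (∏ mz, w (A my) (B mz) (c mz)) * F (A my) c) := by
        refine Finset.sum_congr rfl fun A _ => ?_
        rw [Finset.mul_sum]
        exact Finset.sum_congr rfl fun B _ => h1 A B
    _ = ∑ A : MY → SB, (∏ m, β1 (A m)) *
          (∑ c : MZ → V, (∏ mz, ∑ b, β2 b * w (A my) b (c mz)) * F (A my) c) := by
        exact Finset.sum_congr rfl fun A _ => by rw [h2 A]
    _ = ∑ a, β1 a * ∑ c : MZ → V, (∏ mz, (∑ b, β2 b * w a b (c mz))) * F a c :=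
        collapse (fun _ a => β1 a)
          (fun a => ∑ c : MZ → V, (∏ mz, ∑ b, β2 b * w a b (c mz)) * F a c) my (fun m _ => hβ1s)


def idx1 {V : Type*} [Fintype V] (a : V → Bool) : Finset V :=
  Finset.univ.filter (fun v => a v = true)

def bern1 {V : Type*} [Fintype V] (p : ℝ) (a : V → Bool) : ℝ :=
  ∏ v, if a v then p else 1 - p

def wgt {V : Type*} [Fintype V] [DecidableEq V] (Kinv : ℝ) (s t : Finset V) (v : V) : ℝ :=
  if (s ∩ t).Nonempty then (if v ∈ s ∩ t then ((s ∩ t).card : ℝ)⁻¹ else 0) else Kinv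

def Qdist {V : Type*} [Fintype V] [DecidableEq V] (p2 Kinv : ℝ) (a : V → Bool) (v : V) : ℝ :=
  ∑ b : V → Bool, bern1 p2 b * wgt Kinv (idx1 a) (idx1 b) v

lemma mem_idx1 {V : Type*} [Fintype V] {c : V → Bool} {u : V} : u ∈ idx1 c ↔ c u = true := by
  simp [idx1]

lemma bern1_nonneg {V : Type*} [Fintype V] {p : ℝ} (hp0 : 0 ≤ p) (hp1 : p ≤ 1) (a : V → Bool) :
    0 ≤ bern1 p a :=
  Finset.prod_nonneg fun v _ => by split_ifs <;> linarith

lemma bern1_sum {V : Type*} [Fintype V] [DecidableEq V] (p : ℝ) :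
    ∑ a : V → Bool, bern1 p a = 1 := by
  unfold bern1
  rw [sum_fn_prod (fun (v : V) (s : Bool) => if s then p else 1 - p)]
  refine Finset.prod_eq_one fun v _ => ?_
  rw [Fintype.sum_bool]
  norm_num

lemma wgt_nonneg {V : Type*} [Fintype V] [DecidableEq V] {Kinv : ℝ} (hK : 0 ≤ Kinv)
    (s t : Finset V) (v : V) : 0 ≤ wgt Kinv s t v := by
  unfold wgt
  split_ifs
  · positivity
  · exact le_refl 0
  · exact hK

lemma wgt_sum {V : Type*} [Fintype V] [DecidableEq V] {Kinv : ℝ}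
    (hV : (Fintype.card V : ℝ) * Kinv = 1) (s t : Finset V) :
    ∑ v, wgt Kinv s t v = 1 := by
  unfold wgt
  by_cases hne : (s ∩ t).Nonempty
  · simp only [if_pos hne]
    rw [Finset.sum_ite_mem, Finset.univ_inter, Finset.sum_const, nsmul_eq_mul]
    rw [mul_inv_cancel₀]
    exact Nat.cast_ne_zero.mpr (Finset.card_ne_zero.mpr hne)
  · simp only [if_neg hne]
    rw [Finset.sum_const, Finset.card_univ, nsmul_eq_mul]
    exact hV

lemma Q_nonneg {V : Type*} [Fintype V] [DecidableEq V] {p2 Kinv : ℝ}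
    (hp0 : 0 ≤ p2) (hp1 : p2 ≤ 1) (hK : 0 ≤ Kinv) (a : V → Bool) (v : V) :
    0 ≤ Qdist p2 Kinv a v :=
  Finset.sum_nonneg fun b _ => mul_nonneg (bern1_nonneg hp0 hp1 b) (wgt_nonneg hK _ _ _)

lemma Q_sum {V : Type*} [Fintype V] [DecidableEq V] {p2 Kinv : ℝ}
    (hV : (Fintype.card V : ℝ) * Kinv = 1) (a : V → Bool) :
    ∑ v, Qdist p2 Kinv a v = 1 := by
  unfold Qdist
  rw [Finset.sum_comm]
  have : ∀ b : V → Bool, ∑ v, bern1 p2 b * wgt Kinv (idx1 a) (idx1 b) v = bern1 p2 b := by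
    intro b
    rw [← Finset.mul_sum, wgt_sum hV, mul_one]
  rw [Finset.sum_congr rfl fun b _ => this b, bern1_sum]

lemma Q_out {V : Type*} [Fintype V] [DecidableEq V] (p2 Kinv : ℝ) (a : V → Bool) {v : V}
    (hv : v ∉ idx1 a) :
    Qdist p2 Kinv a v = (1 - p2)^((idx1 a).card) * Kinv := by
  unfold Qdist
  have h1 : ∀ b : V → Bool, wgt Kinv (idx1 a) (idx1 b) v
      = Kinv * ∏ u, (if u ∈ idx1 a then (if b u then (0:ℝ) else 1) else 1) := by
    intro b
    by_cases hne : ((idx1 a) ∩ (idx1 b)).Nonempty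
    · obtain ⟨u0, hu0⟩ := hne
      have hv' : v ∉ idx1 a ∩ idx1 b := fun h => hv (Finset.mem_inter.mp h).1
      have hz : (∏ u, (if u ∈ idx1 a then (if b u then (0:ℝ) else 1) else 1)) = 0 := by
        apply Finset.prod_eq_zero (Finset.mem_univ u0)
        rcases Finset.mem_inter.mp hu0 with ⟨ha1, hb1⟩
        rw [if_pos ha1, if_pos (mem_idx1.mp hb1)]
      rw [wgt, if_pos ⟨u0, hu0⟩, if_neg hv', hz, mul_zero]
    · have ho : (∏ u, (if u ∈ idx1 a then (if b u then (0:ℝ) else 1) else 1)) = 1 := by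
        apply Finset.prod_eq_one
        intro u _
        by_cases hu : u ∈ idx1 a
        · have hbu : ¬ (b u = true) := fun hb =>
            hne ⟨u, Finset.mem_inter.mpr ⟨hu, mem_idx1.mpr hb⟩⟩
          rw [if_pos hu, if_neg hbu]
        · rw [if_neg hu]
      rw [wgt, if_neg hne, ho, mul_one]
  have h2 : ∑ b : V → Bool,
      bern1 p2 b * ∏ u, (if u ∈ idx1 a then (if b u then (0:ℝ) else 1) else 1)
      = (1-p2)^(idx1 a).card := by
    have e : ∀ b : V → Bool, bern1 p2 b * ∏ u, (if u ∈ idx1 a then (if b u then (0:ℝ) else 1) else 1)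
        = ∏ u, ((if b u then p2 else 1-p2) * (if u ∈ idx1 a then (if b u then (0:ℝ) else 1) else 1)) := by
      intro b
      rw [Finset.prod_mul_distrib]
      rfl
    rw [Finset.sum_congr rfl fun b _ => e b,
      sum_fn_prod (fun (u : V) (s : Bool) =>
        (if s then p2 else 1-p2) * (if u ∈ idx1 a then (if s then (0:ℝ) else 1) else 1))]
    have e2 : ∀ u : V, (∑ s : Bool, (if s then p2 else 1-p2) * (if u ∈ idx1 a then (if s then (0:ℝ) else 1) else 1))
        = if u ∈ idx1 a then 1 - p2 else 1 := by
      intro u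
      rw [Fintype.sum_bool]
      by_cases hu : u ∈ idx1 a <;> simp [hu]
    rw [Finset.prod_congr rfl fun u _ => e2 u, ← Finset.prod_filter]
    rw [show Finset.univ.filter (fun u => u ∈ idx1 a) = idx1 a from by
      ext u; simp]
    rw [Finset.prod_const]
  calc ∑ b : V → Bool, bern1 p2 b * wgt Kinv (idx1 a) (idx1 b) v
      = ∑ b : V → Bool, Kinv * (bern1 p2 b * ∏ u, (if u ∈ idx1 a then (if b u then (0:ℝ) else 1) else 1)) := by
        refine Finset.sum_congr rfl fun b _ => ?_
        rw [h1 b]; ring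
    _ = Kinv * ((1-p2)^(idx1 a).card) := by rw [← Finset.mul_sum, h2]
    _ = (1 - p2)^((idx1 a).card) * Kinv := mul_comm _ _


lemma Q_symm {V : Type*} [Fintype V] [DecidableEq V] (p2 Kinv : ℝ) (a : V → Bool) {v v' : V}
    (hv : v ∈ idx1 a) (hv' : v' ∈ idx1 a) :
    Qdist p2 Kinv a v = Qdist p2 Kinv a v' := by
  by_cases hvv : v = v'
  · rw [hvv]
  set e := Equiv.swap v v' with he
  have hee : ∀ u : V, e (e u) = u := fun u => Equiv.swap_apply_self v v' u
  have hsa : ∀ u : V, (u ∈ idx1 a) ↔ (e u ∈ idx1 a) := by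
    intro u
    by_cases h1 : u = v
    · subst h1
      rw [he, Equiv.swap_apply_left]
      exact ⟨fun _ => hv', fun _ => hv⟩
    by_cases h2 : u = v'
    · subst h2
      rw [he, Equiv.swap_apply_right]
      exact ⟨fun _ => hv, fun _ => hv'⟩
    · rw [he, Equiv.swap_apply_of_ne_of_ne h1 h2]
  have hinter : ∀ b : V → Bool,
      idx1 a ∩ idx1 (fun u => b (e u)) = (idx1 a ∩ idx1 b).image e := by
    intro b
    ext u
    simp only [Finset.mem_inter, Finset.mem_image]
    constructor
    · rintro ⟨ha, hb⟩
      have hb' : b (e u) = true := (mem_idx1 (c := fun u => b (e u))).mp hb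
      exact ⟨e u, ⟨(hsa u).mp ha, mem_idx1.mpr hb'⟩, hee u⟩
    · rintro ⟨x, ⟨hax, hbx⟩, rfl⟩
      refine ⟨(hsa x).mp hax, mem_idx1.mpr ?_⟩
      show b (e (e x)) = true
      rw [hee x]
      exact mem_idx1.mp hbx
  have hmem : ∀ b : V → Bool, (v' ∈ (idx1 a ∩ idx1 b).image e ↔ v ∈ idx1 a ∩ idx1 b) := by
    intro b
    constructor
    · rintro hmem
      obtain ⟨x, hx, hex⟩ := Finset.mem_image.mp hmem
      have hxv : x = v := by
        apply e.injective
        rw [hex, he, Equiv.swap_apply_left]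
      rwa [hxv] at hx
    · intro hvm
      exact Finset.mem_image.mpr ⟨v, hvm, by rw [he, Equiv.swap_apply_left]⟩
  have key : ∀ b : V → Bool,
      bern1 p2 b * wgt Kinv (idx1 a) (idx1 b) v
        = bern1 p2 (fun u => b (e u)) * wgt Kinv (idx1 a) (idx1 (fun u => b (e u))) v' := by
    intro b
    have hb : bern1 p2 (fun u => b (e u)) = bern1 p2 b :=
      Equiv.prod_comp e (fun u => if b u then p2 else 1 - p2)
    have hw : wgt Kinv (idx1 a) (idx1 (fun u => b (e u))) v' = wgt Kinv (idx1 a) (idx1 b) v := by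
      unfold wgt
      rw [hinter b]
      simp only [Finset.image_nonempty, Finset.card_image_of_injective _ e.injective]
      exact if_congr Iff.rfl (if_congr (hmem b) rfl rfl) rfl
    rw [hb, hw]
  have hbij : Function.Bijective (fun (b : V → Bool) => (fun u => b (e u))) := by
    have hinv : Function.Involutive (fun (b : V → Bool) => (fun u => b (e u))) := by
      intro b
      funext u
      show b (e (e u)) = b u
      rw [hee u]
    exact hinv.bijective
  exact Fintype.sum_bijective _ hbij _ _ key

lemma tv_Q_unif {V : Type*} [Fintype V] [DecidableEq V] (p2 : ℝ) (hp21 : p2 ≤ 1)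
    (Kinv : ℝ) (hVK : (Fintype.card V : ℝ) * Kinv = 1)
    (a : V → Bool) (hne : (idx1 a).Nonempty) :
    tvDist (Qdist p2 Kinv a)
      (fun v => if v ∈ idx1 a then ((idx1 a).card : ℝ)⁻¹ else 0)
      ≤ (1 - p2) ^ (idx1 a).card := by
  obtain ⟨v₀, hv₀⟩ := hne
  set s := idx1 a with hs
  set m := s.card with hm
  set δ := (1 - p2)^m with hδ
  set Q := Qdist p2 Kinv a with hQ
  have hδ0 : 0 ≤ δ := pow_nonneg (by linarith) m
  have hV0 : 0 < Fintype.card V := Fintype.card_pos_iff.mpr ⟨v₀⟩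
  have hKr : (0:ℝ) < (Fintype.card V : ℝ) := by exact_mod_cast hV0
  have hKinveq : ((Fintype.card V : ℝ))⁻¹ = Kinv := inv_eq_of_mul_eq_one_right hVK
  have hKinv0 : 0 ≤ Kinv := by rw [← hKinveq]; positivity
  have hsumQ : ∑ v, Q v = 1 := Q_sum hVK a
  have hm0 : 0 < m := Finset.card_pos.mpr ⟨v₀, hv₀⟩
  have hmr : (0:ℝ) < (m:ℝ) := by exact_mod_cast hm0
  have hcompl : ∀ v ∈ sᶜ, Q v = δ * Kinv := by
    intro v hvc
    exact Q_out p2 Kinv a (Finset.mem_compl.mp hvc)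
  have hsum_compl : ∑ v ∈ sᶜ, Q v = (sᶜ.card : ℝ) * (δ * Kinv) := by
    rw [Finset.sum_congr rfl hcompl, Finset.sum_const, nsmul_eq_mul]
  set D := (sᶜ.card : ℝ) * (δ * Kinv) with hD
  have hD0 : 0 ≤ D := by positivity
  have hsum_s : ∑ v ∈ s, Q v = 1 - D := by
    have h := Finset.sum_add_sum_compl s Q
    rw [hsumQ, hsum_compl] at h
    linarith
  have hQv0 : ∀ v ∈ s, Q v = Q v₀ := fun v hv => Q_symm p2 Kinv a hv hv₀
  have hms : (m:ℝ) * Q v₀ = 1 - D := by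
    rw [← hsum_s, Finset.sum_congr rfl hQv0, Finset.sum_const, nsmul_eq_mul, ← hm]
  have habs_s : ∑ v ∈ s, |Q v - (fun v => if v ∈ s then ((m:ℝ))⁻¹ else 0) v| = D := by
    have e1 : ∀ v ∈ s, |Q v - (fun v => if v ∈ s then ((m:ℝ))⁻¹ else 0) v| = |Q v₀ - (m:ℝ)⁻¹| := by
      intro v hv
      simp only [if_pos hv]
      rw [hQv0 v hv]
    rw [Finset.sum_congr rfl e1, Finset.sum_const, nsmul_eq_mul, ← hm]
    have : (m:ℝ) * |Q v₀ - (m:ℝ)⁻¹| = |(m:ℝ) * Q v₀ - 1| := by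
      have h1 : (m:ℝ) * Q v₀ - 1 = (m:ℝ) * (Q v₀ - (m:ℝ)⁻¹) := by
        field_simp
      rw [h1, abs_mul, abs_of_pos hmr]
    rw [this, hms]
    rw [show (1:ℝ) - D - 1 = -D by ring, abs_neg, abs_of_nonneg hD0]
  have habs_c : ∑ v ∈ sᶜ, |Q v - (fun v => if v ∈ s then ((m:ℝ))⁻¹ else 0) v| = D := by
    have e1 : ∀ v ∈ sᶜ, |Q v - (fun v => if v ∈ s then ((m:ℝ))⁻¹ else 0) v| = δ * Kinv := by
      intro v hvc
      simp only [if_neg (Finset.mem_compl.mp hvc)]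
      rw [sub_zero, hcompl v hvc, abs_of_nonneg (by positivity)]
    rw [Finset.sum_congr rfl e1, Finset.sum_const, nsmul_eq_mul, ← hD]
  have htv : tvDist Q (fun v => if v ∈ s then ((m:ℝ))⁻¹ else 0) = D := by
    show (1/2) * ∑ v, |Q v - (fun v => if v ∈ s then ((m:ℝ))⁻¹ else 0) v| = D
    rw [← Finset.sum_add_sum_compl s (fun v => |Q v - (fun v => if v ∈ s then ((m:ℝ))⁻¹ else 0) v|),
      habs_s, habs_c]
    ring
  rw [htv]
  calc D = δ * ((sᶜ.card : ℝ) * Kinv) := by rw [hD]; ring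
    _ ≤ δ * ((Fintype.card V : ℝ) * Kinv) := by
        apply mul_le_mul_of_nonneg_left _ hδ0
        apply mul_le_mul_of_nonneg_right _ hKinv0
        exact_mod_cast Finset.card_le_univ _
    _ = δ := by rw [hVK, mul_one]


lemma phi_bound {V MZ : Type*} [Fintype V] [DecidableEq V] [Fintype MZ] [DecidableEq MZ]
    (μ : V → ℝ) (hμ0 : ∀ v, 0 ≤ μ v) (hμ1 : ∑ v, μ v = 1)
    (Pt : V → ℝ) (ε : ℝ) (hε0 : 0 < ε) (hε1 : ε ≤ 1)
    (hPt : tvDist μ Pt ≤ ε/2)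
    (hMZ : 0 < Fintype.card MZ) (hV : 0 < Fintype.card V) :
    ∑ c : MZ → V, (∏ mz, μ (c mz)) *
      (if ε ≤ tvDist (fun v => ((Fintype.card MZ : ℝ))⁻¹ * ∑ mz, (if c mz = v then (1:ℝ) else 0)) Pt
        then (1:ℝ) else 0)
    ≤ 2 * (Fintype.card V : ℝ) *
        Real.exp (-((Fintype.card MZ : ℝ) * (ε/(Fintype.card V : ℝ))^2 / 4)) := by
  set K := (Fintype.card V : ℝ) with hK
  set N := (Fintype.card MZ : ℝ) with hN
  have hK1 : (1:ℝ) ≤ K := by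
    rw [hK]; exact_mod_cast hV
  have hN0 : (0:ℝ) < N := by
    rw [hN]; exact_mod_cast hMZ
  set η := ε / K with hη
  have hη0 : 0 < η := by positivity
  have hη1 : η ≤ 1 := by
    rw [hη, div_le_one (by linarith)]; linarith
  set emp := fun (c : MZ → V) (v : V) => N⁻¹ * ∑ mz, (if c mz = v then (1:ℝ) else 0) with hemp
  set iUP := fun (v : V) (c : MZ → V) =>
    (if N * (μ v + η) ≤ ∑ mz, (if c mz = v then (1:ℝ) else 0) then (1:ℝ) else 0) with hiUP
  set iLO := fun (v : V) (c : MZ → V) =>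
    (if (∑ mz, (if c mz = v then (1:ℝ) else 0)) ≤ N * (μ v - η) then (1:ℝ) else 0) with hiLO
  have hiU0 : ∀ v c, 0 ≤ iUP v c := by
    intro v c; rw [hiUP]; dsimp only; split_ifs <;> norm_num
  have hiL0 : ∀ v c, 0 ≤ iLO v c := by
    intro v c; rw [hiLO]; dsimp only; split_ifs <;> norm_num
  have hpt : ∀ c : MZ → V,
      (if ε ≤ tvDist (emp c) Pt then (1:ℝ) else 0) ≤ ∑ v, (iUP v c + iLO v c) := by
    intro c
    by_cases hc : ε ≤ tvDist (emp c) Pt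
    · rw [if_pos hc]
      have htri := tvDist_triangle (emp c) μ Pt
      have h2 : ε/2 ≤ tvDist (emp c) μ := by linarith
      have hdef : tvDist (emp c) μ = (1/2) * ∑ v, |emp c v - μ v| := rfl
      have hsum : ε ≤ ∑ v, |emp c v - μ v| := by
        rw [hdef] at h2; linarith
      have hex : ∃ v, η ≤ |emp c v - μ v| := by
        by_contra hno
        push_neg at hno
        have : Nonempty V := Fintype.card_pos_iff.mp hV
        have huniv : (Finset.univ : Finset V).Nonempty := Finset.univ_nonempty
        have hlt : ∑ v, |emp c v - μ v| < ∑ _v : V, η :=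
          Finset.sum_lt_sum_of_nonempty huniv (fun v _ => hno v)
        rw [Finset.sum_const, Finset.card_univ, nsmul_eq_mul] at hlt
        have hKη : K * η = ε := by
          rw [hη]; field_simp
        rw [← hK] at hlt
        linarith
      obtain ⟨v, hvdev⟩ := hex
      have hcnt : ∑ mz, (if c mz = v then (1:ℝ) else 0) = N * emp c v := by
        rw [hemp]; dsimp only
        rw [← mul_assoc, mul_inv_cancel₀ (ne_of_gt hN0), one_mul]
      have hterm : (1:ℝ) ≤ iUP v c + iLO v c := by
        rcases le_abs.mp hvdev with h | h
        · have hup : N * (μ v + η) ≤ ∑ mz, (if c mz = v then (1:ℝ) else 0) := by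
            rw [hcnt]
            have hh : μ v + η ≤ emp c v := by linarith
            nlinarith
          rw [hiUP]; dsimp only; rw [if_pos hup]
          have := hiL0 v c
          linarith
        · have hlo : (∑ mz, (if c mz = v then (1:ℝ) else 0)) ≤ N * (μ v - η) := by
            rw [hcnt]
            have hh : emp c v ≤ μ v - η := by linarith
            nlinarith
          rw [hiLO]; dsimp only; rw [if_pos hlo]
          have := hiU0 v c
          linarith
      exact le_trans hterm (Finset.single_le_sum (f := fun v => iUP v c + iLO v c)
        (fun v _ => add_nonneg (hiU0 v c) (hiL0 v c)) (Finset.mem_univ v))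
    · rw [if_neg hc]
      exact Finset.sum_nonneg fun v _ => add_nonneg (hiU0 v c) (hiL0 v c)
  have hprod0 : ∀ c : MZ → V, (0:ℝ) ≤ ∏ mz, μ (c mz) :=
    fun c => Finset.prod_nonneg fun mz _ => hμ0 _
  have hstep : ∑ c : MZ → V, (∏ mz, μ (c mz)) * (if ε ≤ tvDist (emp c) Pt then (1:ℝ) else 0)
      ≤ ∑ v, ((∑ c : MZ → V, (∏ mz, μ (c mz)) * iUP v c)
            + (∑ c : MZ → V, (∏ mz, μ (c mz)) * iLO v c)) := by
    calc ∑ c : MZ → V, (∏ mz, μ (c mz)) * (if ε ≤ tvDist (emp c) Pt then (1:ℝ) else 0)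
        ≤ ∑ c : MZ → V, (∏ mz, μ (c mz)) * (∑ v, (iUP v c + iLO v c)) :=
          Finset.sum_le_sum fun c _ => mul_le_mul_of_nonneg_left (hpt c) (hprod0 c)
      _ = ∑ c : MZ → V, ∑ v, ((∏ mz, μ (c mz)) * iUP v c + (∏ mz, μ (c mz)) * iLO v c) := by
          refine Finset.sum_congr rfl fun c _ => ?_
          rw [Finset.mul_sum]
          exact Finset.sum_congr rfl fun v _ => by ring
      _ = ∑ v, ∑ c : MZ → V, ((∏ mz, μ (c mz)) * iUP v c + (∏ mz, μ (c mz)) * iLO v c) :=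
          Finset.sum_comm
      _ = ∑ v, ((∑ c : MZ → V, (∏ mz, μ (c mz)) * iUP v c)
            + (∑ c : MZ → V, (∏ mz, μ (c mz)) * iLO v c)) := by
          exact Finset.sum_congr rfl fun v _ => Finset.sum_add_distrib
  refine le_trans hstep ?_
  have htails : ∀ v : V,
      (∑ c : MZ → V, (∏ mz, μ (c mz)) * iUP v c) + (∑ c : MZ → V, (∏ mz, μ (c mz)) * iLO v c)
      ≤ 2 * Real.exp (-(N * η^2 / 4)) := by
    intro v
    have h1 := tail_upper (I := MZ) μ hμ0 hμ1 v hη0 hη1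
    have h2 := tail_lower (I := MZ) μ hμ0 hμ1 v hη0 hη1
    rw [hiUP, hiLO]
    dsimp only
    rw [← hN] at h1 h2
    linarith
  calc ∑ v, ((∑ c : MZ → V, (∏ mz, μ (c mz)) * iUP v c)
        + (∑ c : MZ → V, (∏ mz, μ (c mz)) * iLO v c))
      ≤ ∑ _v : V, 2 * Real.exp (-(N * η^2 / 4)) :=
        Finset.sum_le_sum fun v _ => htails v
    _ = K * (2 * Real.exp (-(N * η^2 / 4))) := by
        rw [Finset.sum_const, Finset.card_univ, nsmul_eq_mul, hK]
    _ = 2 * K * Real.exp (-(N * (ε/K)^2 / 4)) := by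
        rw [hη]; ring


lemma card_idx1 {V : Type*} [Fintype V] (a : V → Bool) :
    ((idx1 a).card : ℝ) = ∑ v, (if a v then (1:ℝ) else 0) := by
  rw [idx1, Finset.card_filter]
  push_cast
  rfl

set_option maxHeartbeats 2000000 in
lemma single_my_bound (RY RZ RtY RtZ Rpool : ℝ) (n : ℕ) (ε : ℝ)
    (hε0 : 0 < ε) (hε1 : ε ≤ 1)
    (hp1a : 0 ≤ (n:ℝ) * (Rpool - RtY)) (hp2a : 0 ≤ (n:ℝ) * (Rpool - RtZ))
    (hδ : ∀ m : ℕ, (Kpool Rpool n : ℝ) * Real.exp (-((n:ℝ) * (Rpool - RtY))) / 2 < (m:ℝ) →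
        (1 - Real.exp (-((n:ℝ) * (Rpool - RtZ))))^m ≤ ε/2)
    (my : Fin (Kmsg RY n)) :
    ∑ ω ∈ Finset.univ.filter (fun ω : BCOutcome RY RZ Rpool n =>
        ε ≤ tvDist (PVmy RY RZ Rpool n ω my) (PtildeVmy RY RZ Rpool n ω my)),
      bcWeight RY RZ RtY RtZ Rpool n ω
    ≤ Real.exp (-((1 - Real.log 2)/2 * ((Kpool Rpool n : ℝ) * Real.exp (-((n:ℝ) * (Rpool - RtY))))))
      + 2 * (Kpool Rpool n : ℝ) *
          Real.exp (-((Kmsg RZ n : ℝ) * (ε/(Kpool Rpool n : ℝ))^2 / 4)) := by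
  classical
  have hKn : 0 < Kpool Rpool n := Nat.ceil_pos.mpr (Real.exp_pos _)
  have hNZn : 0 < Kmsg RZ n := Nat.ceil_pos.mpr (Real.exp_pos _)
  set p1 := Real.exp (-((n:ℝ) * (Rpool - RtY))) with hp1def
  set p2 := Real.exp (-((n:ℝ) * (Rpool - RtZ))) with hp2def
  have hp10 : 0 < p1 := Real.exp_pos _
  have hp11 : p1 ≤ 1 := by
    rw [hp1def, ← Real.exp_zero]
    exact Real.exp_le_exp.mpr (by linarith)
  have hp20 : 0 < p2 := Real.exp_pos _
  have hp21 : p2 ≤ 1 := by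
    rw [hp2def, ← Real.exp_zero]
    exact Real.exp_le_exp.mpr (by linarith)
  set Kinv := ((Kpool Rpool n : ℝ))⁻¹ with hKinvdef
  have hKr : (0:ℝ) < (Kpool Rpool n : ℝ) := by exact_mod_cast hKn
  have hKinv0 : 0 ≤ Kinv := by positivity
  have hVK : ((Fintype.card (Fin (Kpool Rpool n)) : ℝ)) * Kinv = 1 := by
    rw [Fintype.card_fin, hKinvdef]
    field_simp
  set Pt := fun (a : Fin (Kpool Rpool n) → Bool) (v : Fin (Kpool Rpool n)) =>
    (if (idx1 a).Nonempty then (if v ∈ idx1 a then ((idx1 a).card : ℝ)⁻¹ else 0)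
     else (if v = vstar Rpool n then 1 else 0)) with hPtdef
  set F := fun (a : Fin (Kpool Rpool n) → Bool) (c : Fin (Kmsg RZ n) → Fin (Kpool Rpool n)) =>
    (if ε ≤ tvDist (fun v => ((Kmsg RZ n : ℝ))⁻¹ * ∑ mz, (if c mz = v then (1:ℝ) else 0)) (Pt a)
     then (1:ℝ) else 0) with hFdef
  have hLHS : ∑ ω ∈ Finset.univ.filter (fun ω : BCOutcome RY RZ Rpool n =>
        ε ≤ tvDist (PVmy RY RZ Rpool n ω my) (PtildeVmy RY RZ Rpool n ω my)),
      bcWeight RY RZ RtY RtZ Rpool n ω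
      = ∑ A : Fin (Kmsg RY n) → Fin (Kpool Rpool n) → Bool,
        ∑ B : Fin (Kmsg RZ n) → Fin (Kpool Rpool n) → Bool,
        ∑ C : Fin (Kmsg RY n) → Fin (Kmsg RZ n) → Fin (Kpool Rpool n),
        ((∏ m, bern1 p1 (A m)) * (∏ m, bern1 p2 (B m)) *
          (∏ m, ∏ mz, wgt Kinv (idx1 (A m)) (idx1 (B mz)) (C m mz))) * F (A my) (C my) := by
    rw [Finset.sum_filter, Fintype.sum_prod_type]
    refine Finset.sum_congr rfl fun A _ => ?_
    rw [Fintype.sum_prod_type]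
    refine Finset.sum_congr rfl fun B _ => Finset.sum_congr rfl fun C _ => ?_
    by_cases h : ε ≤ tvDist (PVmy RY RZ Rpool n (A, B, C) my) (PtildeVmy RY RZ Rpool n (A, B, C) my)
    · rw [if_pos h]
      have hF1 : F (A my) (C my) = 1 := if_pos h
      rw [hF1, mul_one]
      rfl
    · rw [if_neg h]
      have hF0 : F (A my) (C my) = 0 := if_neg h
      rw [hF0, mul_zero]
  rw [hLHS, marg (bern1 p1) (bern1 p2)
      (fun a b v => wgt Kinv (idx1 a) (idx1 b) v) F (bern1_sum p1) (bern1_sum p2)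
      (fun a b => wgt_sum hVK (idx1 a) (idx1 b)) my]
  show (∑ a : Fin (Kpool Rpool n) → Bool, bern1 p1 a *
      ∑ c : Fin (Kmsg RZ n) → Fin (Kpool Rpool n),
        (∏ mz, Qdist p2 Kinv a (c mz)) * F a c) ≤ _
  set B2 := 2 * (Kpool Rpool n : ℝ) *
      Real.exp (-((Kmsg RZ n : ℝ) * (ε/(Kpool Rpool n : ℝ))^2 / 4)) with hB2def
  have hB20 : 0 ≤ B2 := by positivity
  have hQ0 : ∀ (a : Fin (Kpool Rpool n) → Bool) v, 0 ≤ Qdist p2 Kinv a v :=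
    fun a v => Q_nonneg (le_of_lt hp20) hp21 hKinv0 a v
  have hQs : ∀ a : Fin (Kpool Rpool n) → Bool, ∑ v, Qdist p2 Kinv a v = 1 :=
    fun a => Q_sum hVK a
  have hF0 : ∀ a c, 0 ≤ F a c := by
    intro a c; rw [hFdef]; dsimp only; split_ifs <;> norm_num
  have hF1 : ∀ a c, F a c ≤ 1 := by
    intro a c; rw [hFdef]; dsimp only; split_ifs <;> norm_num
  have hΦ1 : ∀ a : Fin (Kpool Rpool n) → Bool,
      (∑ c : Fin (Kmsg RZ n) → Fin (Kpool Rpool n),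
        (∏ mz, Qdist p2 Kinv a (c mz)) * F a c) ≤ 1 := by
    intro a
    have hone : ∑ c : Fin (Kmsg RZ n) → Fin (Kpool Rpool n),
        (∏ mz, Qdist p2 Kinv a (c mz)) = 1 := by
      rw [sum_fn_prod (fun (_ : Fin (Kmsg RZ n)) (v : Fin (Kpool Rpool n)) => Qdist p2 Kinv a v)]
      exact Finset.prod_eq_one fun mz _ => hQs a
    calc ∑ c : Fin (Kmsg RZ n) → Fin (Kpool Rpool n), (∏ mz, Qdist p2 Kinv a (c mz)) * F a c
        ≤ ∑ c : Fin (Kmsg RZ n) → Fin (Kpool Rpool n), (∏ mz, Qdist p2 Kinv a (c mz)) * 1 :=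
          Finset.sum_le_sum fun c _ => mul_le_mul_of_nonneg_left (hF1 a c)
            (Finset.prod_nonneg fun mz _ => hQ0 a _)
      _ = 1 := by
          simp only [mul_one]
          exact hone
  have hΦbig : ∀ a : Fin (Kpool Rpool n) → Bool,
      (Kpool Rpool n : ℝ) * p1 / 2 < ((idx1 a).card : ℝ) →
      (∑ c : Fin (Kmsg RZ n) → Fin (Kpool Rpool n),
        (∏ mz, Qdist p2 Kinv a (c mz)) * F a c) ≤ B2 := by
    intro a hbig
    have hcard0 : 0 < (idx1 a).card := by
      have hpos : (0:ℝ) < (Kpool Rpool n : ℝ) * p1 / 2 := by positivity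
      have h2 : (0:ℝ) < ((idx1 a).card : ℝ) := lt_trans hpos hbig
      exact_mod_cast h2
    have hne : (idx1 a).Nonempty := Finset.card_pos.mp hcard0
    have hPtA : Pt a = fun v => if v ∈ idx1 a then ((idx1 a).card : ℝ)⁻¹ else 0 := by
      funext v
      rw [hPtdef]
      dsimp only
      rw [if_pos hne]
    have hδa : (1 - p2)^((idx1 a).card) ≤ ε/2 := hδ _ hbig
    have htv : tvDist (Qdist p2 Kinv a) (Pt a) ≤ ε/2 := by
      rw [hPtA]
      exact le_trans (tv_Q_unif p2 hp21 Kinv hVK a hne) hδa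
    have hMZc : 0 < Fintype.card (Fin (Kmsg RZ n)) := by rw [Fintype.card_fin]; exact hNZn
    have hVc : 0 < Fintype.card (Fin (Kpool Rpool n)) := by rw [Fintype.card_fin]; exact hKn
    have h := phi_bound (Qdist p2 Kinv a) (hQ0 a) (hQs a) (Pt a) ε hε0 hε1 htv hMZc hVc
    simp only [Fintype.card_fin] at h
    rw [hB2def, hFdef]
    exact h
  have hsplit : ∀ a : Fin (Kpool Rpool n) → Bool,
      (∑ c : Fin (Kmsg RZ n) → Fin (Kpool Rpool n),
        (∏ mz, Qdist p2 Kinv a (c mz)) * F a c)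
      ≤ (if ((idx1 a).card : ℝ) ≤ (Kpool Rpool n : ℝ) * p1 / 2 then (1:ℝ) else 0) + B2 := by
    intro a
    by_cases hc : ((idx1 a).card : ℝ) ≤ (Kpool Rpool n : ℝ) * p1 / 2
    · rw [if_pos hc]
      linarith [hΦ1 a]
    · rw [if_neg hc]
      push_neg at hc
      linarith [hΦbig a hc]
  have hbin : ∑ a : Fin (Kpool Rpool n) → Bool, bern1 p1 a *
        (if ((idx1 a).card : ℝ) ≤ (Kpool Rpool n : ℝ) * p1 / 2 then (1:ℝ) else 0)
      ≤ Real.exp (-((1 - Real.log 2)/2 * ((Kpool Rpool n : ℝ) * p1))) := by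
    have h := tail_binom (I := Fin (Kpool Rpool n)) p1 (le_of_lt hp10) hp11
    simp only [Fintype.card_fin] at h
    refine le_trans (le_of_eq ?_) h
    refine Finset.sum_congr rfl fun a _ => ?_
    have hcongr : (if ((idx1 a).card : ℝ) ≤ (Kpool Rpool n : ℝ) * p1 / 2 then (1:ℝ) else 0)
        = (if (∑ v, (if a v then (1:ℝ) else 0)) ≤ (Kpool Rpool n : ℝ) * p1 / 2 then (1:ℝ) else 0) :=
      if_congr (by rw [card_idx1]) rfl rfl
    rw [hcongr]
    rfl
  calc ∑ a : Fin (Kpool Rpool n) → Bool, bern1 p1 a *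
        ∑ c : Fin (Kmsg RZ n) → Fin (Kpool Rpool n), (∏ mz, Qdist p2 Kinv a (c mz)) * F a c
      ≤ ∑ a : Fin (Kpool Rpool n) → Bool, bern1 p1 a *
          ((if ((idx1 a).card : ℝ) ≤ (Kpool Rpool n : ℝ) * p1 / 2 then (1:ℝ) else 0) + B2) :=
        Finset.sum_le_sum fun a _ =>
          mul_le_mul_of_nonneg_left (hsplit a) (bern1_nonneg (le_of_lt hp10) hp11 a)
    _ = (∑ a : Fin (Kpool Rpool n) → Bool, bern1 p1 a *
          (if ((idx1 a).card : ℝ) ≤ (Kpool Rpool n : ℝ) * p1 / 2 then (1:ℝ) else 0))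
        + (∑ a : Fin (Kpool Rpool n) → Bool, bern1 p1 a) * B2 := by
        rw [Finset.sum_mul, ← Finset.sum_add_distrib]
        exact Finset.sum_congr rfl fun a _ => by ring
    _ ≤ Real.exp (-((1 - Real.log 2)/2 * ((Kpool Rpool n : ℝ) * p1))) + 1 * B2 := by
        apply add_le_add hbin
        rw [bern1_sum p1]
    _ = Real.exp (-((1 - Real.log 2)/2 * ((Kpool Rpool n : ℝ) * p1))) + B2 := by rw [one_mul]


lemma bcWeight_nonneg (RY RZ RtY RtZ Rpool : ℝ) (n : ℕ)
    (h1 : 0 ≤ (n:ℝ) * (Rpool - RtY)) (h2 : 0 ≤ (n:ℝ) * (Rpool - RtZ))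
    (ω : BCOutcome RY RZ Rpool n) : 0 ≤ bcWeight RY RZ RtY RtZ Rpool n ω := by
  have e1 : Real.exp (-((n:ℝ) * (Rpool - RtY))) ≤ 1 := by
    rw [← Real.exp_zero]; exact Real.exp_le_exp.mpr (by linarith)
  have e2 : Real.exp (-((n:ℝ) * (Rpool - RtZ))) ≤ 1 := by
    rw [← Real.exp_zero]; exact Real.exp_le_exp.mpr (by linarith)
  unfold bcWeight bernWeight
  apply mul_nonneg (mul_nonneg ?_ ?_) ?_
  · exact Finset.prod_nonneg fun a _ => Finset.prod_nonneg fun b _ => by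
      split_ifs
      · exact (Real.exp_pos _).le
      · linarith
  · exact Finset.prod_nonneg fun a _ => Finset.prod_nonneg fun b _ => by
      split_ifs
      · exact (Real.exp_pos _).le
      · linarith
  · refine Finset.prod_nonneg fun a _ => Finset.prod_nonneg fun b _ => ?_
    split_ifs
    · positivity
    · exact le_refl 0
    · positivity

end BCAux


set_option maxHeartbeats 4000000 in
/-- **inequality (69).** In the random BC code construction,
there is `τ > 0` such that the probability that
`max_{m_Y} d(P_V^{(m_Y)}, P̃_V^{(m_Y)}) ≥ e^{-nτ}` tends to zero as `n → ∞`. -/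
theorem bc_random_code_tv_claim
    (RY RZ RtY RtZ Rpool : ℝ)
    (hY0 : 0 < RY) (hY1 : RY < RtY) (hY2 : RtY < Rpool)
    (hZ0 : 0 < RZ) (hZ1 : RZ < RtZ) (hZ2 : RtZ < Rpool)
    (hpool : Rpool < RtY + RtZ) :
    ∃ τ : ℝ, 0 < τ ∧
      Filter.Tendsto
        (fun n : ℕ =>
          ∑ ω ∈ Finset.univ.filter
              (fun ω : BCOutcome RY RZ Rpool n =>
                ∃ my, Real.exp (-(n * τ)) ≤
                  tvDist (PVmy RY RZ Rpool n ω my) (PtildeVmy RY RZ Rpool n ω my)),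
            bcWeight RY RZ RtY RtZ Rpool n ω)
        Filter.atTop (nhds 0) := by
  classical
  refine ⟨1, one_pos, ?_⟩
  have hc1 : 0 < (1 - Real.log 2)/2 := by
    have := Real.log_two_lt_d9
    norm_num
    linarith
  have hp1a : ∀ n : ℕ, 0 ≤ (n:ℝ) * (Rpool - RtY) :=
    fun n => mul_nonneg (Nat.cast_nonneg n) (by linarith)
  have hp2a : ∀ n : ℕ, 0 ≤ (n:ℝ) * (Rpool - RtZ) :=
    fun n => mul_nonneg (Nat.cast_nonneg n) (by linarith)
  have hw : ∀ (n : ℕ) (ω : BCOutcome RY RZ Rpool n), 0 ≤ bcWeight RY RZ RtY RtZ Rpool n ω :=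
    fun n ω => BCAux.bcWeight_nonneg RY RZ RtY RtZ Rpool n (hp1a n) (hp2a n) ω
  set g := fun n : ℕ =>
      2 * Real.exp (Real.exp ((n:ℝ)*RY)) *
        Real.exp (-((1 - Real.log 2)/2 * Real.exp ((n:ℝ)*RtY)))
      + 4 * Real.exp (Real.exp ((n:ℝ)*RY)) * Real.exp ((n:ℝ)*Rpool + 1) *
          Real.exp (-(Real.exp (Real.exp ((n:ℝ)*RZ) - (2+2*Rpool)*(n:ℝ) - 4))) with hgdef
  apply squeeze_zero' (Filter.Eventually.of_forall fun n => Finset.sum_nonneg fun ω _ => hw n ω)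
  · -- eventually f n ≤ g n
    have hσp : 0 < RtY + RtZ - Rpool := by linarith
    filter_upwards [BCAux.ev_poly_le_exp (RtY + RtZ - Rpool) hσp (2*Real.log 2) 2] with n hcond
    set p1 := Real.exp (-((n:ℝ) * (Rpool - RtY))) with hp1def
    set p2 := Real.exp (-((n:ℝ) * (Rpool - RtZ))) with hp2def
    set Kr := ((Kpool Rpool n : ℕ) : ℝ) with hKrdef
    set ε := Real.exp (-((n:ℝ) * 1)) with hεdef
    have hε0 : 0 < ε := Real.exp_pos _
    have hn0 : (0:ℝ) ≤ (n:ℝ) := Nat.cast_nonneg n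
    have hε1 : ε ≤ 1 := by
      rw [hεdef]
      calc Real.exp (-((n:ℝ) * 1)) ≤ Real.exp 0 := Real.exp_le_exp.mpr (by nlinarith)
        _ = 1 := Real.exp_zero
    have hp10 : 0 < p1 := Real.exp_pos _
    have hp20 : 0 < p2 := Real.exp_pos _
    have hp21 : p2 ≤ 1 := by
      rw [hp2def, ← Real.exp_zero]
      exact Real.exp_le_exp.mpr (by linarith [hp2a n])
    have hKn : 0 < Kpool Rpool n := Nat.ceil_pos.mpr (Real.exp_pos _)
    have hKr0 : (0:ℝ) < Kr := by rw [hKrdef]; exact_mod_cast hKn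
    have hKlb : Real.exp ((n:ℝ)*Rpool) ≤ Kr := Nat.le_ceil _
    have hδn : ∀ m : ℕ, Kr * p1 / 2 < (m:ℝ) → (1 - p2)^m ≤ ε/2 := by
      intro m hm
      have hstep1 : (1 - p2)^m ≤ Real.exp (-p2) ^ m := by
        apply pow_le_pow_left₀ (by linarith)
        linarith [Real.add_one_le_exp (-p2)]
      have hstep2 : Real.exp (-p2) ^ m = Real.exp ((m:ℝ) * (-p2)) := (Real.exp_nat_mul _ m).symm
      have hmono1 : (m:ℝ) * (-p2) ≤ (Kr * p1 / 2) * (-p2) := by nlinarith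
      have hprod : Real.exp ((n:ℝ)*(RtY+RtZ-Rpool)) ≤ Kr * p1 * p2 := by
        have heq : Real.exp ((n:ℝ)*(RtY+RtZ-Rpool)) = Real.exp ((n:ℝ)*Rpool) * p1 * p2 := by
          rw [hp1def, hp2def, ← Real.exp_add, ← Real.exp_add]
          ring_nf
        rw [heq]
        exact mul_le_mul_of_nonneg_right (mul_le_mul_of_nonneg_right hKlb hp10.le) hp20.le
      have hmono2 : (Kr * p1 / 2) * (-p2) ≤ -((n:ℝ) + Real.log 2) := by nlinarith [hcond]
      have hfin : Real.exp (-((n:ℝ) + Real.log 2)) = ε/2 := by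
        rw [hεdef, show -((n:ℝ) + Real.log 2) = (-((n:ℝ)*1)) + (-Real.log 2) by ring,
          Real.exp_add, Real.exp_neg (Real.log 2), Real.exp_log (by norm_num : (0:ℝ) < 2)]
        ring
      calc (1 - p2)^m ≤ Real.exp ((m:ℝ) * (-p2)) := by rw [← hstep2]; exact hstep1
        _ ≤ Real.exp (-((n:ℝ) + Real.log 2)) :=
            Real.exp_le_exp.mpr (le_trans hmono1 hmono2)
        _ = ε/2 := hfin
    refine le_trans (BCAux.union_bound (bcWeight RY RZ RtY RtZ Rpool n) (hw n)
      (fun my ω => ε ≤ tvDist (PVmy RY RZ Rpool n ω my) (PtildeVmy RY RZ Rpool n ω my))) ?_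
    have hsb : ∀ my : Fin (Kmsg RY n),
        ∑ ω ∈ Finset.univ.filter (fun ω : BCOutcome RY RZ Rpool n =>
            ε ≤ tvDist (PVmy RY RZ Rpool n ω my) (PtildeVmy RY RZ Rpool n ω my)),
          bcWeight RY RZ RtY RtZ Rpool n ω
        ≤ Real.exp (-((1 - Real.log 2)/2 * (Kr * p1)))
          + 2 * Kr * Real.exp (-((Kmsg RZ n : ℝ) * (ε/Kr)^2 / 4)) :=
      fun my => BCAux.single_my_bound RY RZ RtY RtZ Rpool n ε hε0 hε1 (hp1a n) (hp2a n) hδn my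
    have hchain : ∑ my : Fin (Kmsg RY n), ∑ ω ∈ Finset.univ.filter
          (fun ω : BCOutcome RY RZ Rpool n =>
            ε ≤ tvDist (PVmy RY RZ Rpool n ω my) (PtildeVmy RY RZ Rpool n ω my)),
          bcWeight RY RZ RtY RtZ Rpool n ω
        ≤ (Kmsg RY n : ℝ) * (Real.exp (-((1 - Real.log 2)/2 * (Kr * p1)))
            + 2 * Kr * Real.exp (-((Kmsg RZ n : ℝ) * (ε/Kr)^2 / 4))) := by
      calc ∑ my : Fin (Kmsg RY n), ∑ ω ∈ Finset.univ.filter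
            (fun ω : BCOutcome RY RZ Rpool n =>
              ε ≤ tvDist (PVmy RY RZ Rpool n ω my) (PtildeVmy RY RZ Rpool n ω my)),
            bcWeight RY RZ RtY RtZ Rpool n ω
          ≤ ∑ _my : Fin (Kmsg RY n), (Real.exp (-((1 - Real.log 2)/2 * (Kr * p1)))
              + 2 * Kr * Real.exp (-((Kmsg RZ n : ℝ) * (ε/Kr)^2 / 4))) :=
            Finset.sum_le_sum fun my _ => hsb my
        _ = (Kmsg RY n : ℝ) * (Real.exp (-((1 - Real.log 2)/2 * (Kr * p1)))
              + 2 * Kr * Real.exp (-((Kmsg RZ n : ℝ) * (ε/Kr)^2 / 4))) := by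
            rw [Finset.sum_const, Finset.card_univ, Fintype.card_fin, nsmul_eq_mul]
    refine le_trans hchain ?_
    -- pure arithmetic to reach g n
    have hMY : (Kmsg RY n : ℝ) ≤ 2 * Real.exp (Real.exp ((n:ℝ)*RY)) := by
      have h1 : (Kmsg RY n : ℝ) < Real.exp (Real.exp ((n:ℝ)*RY)) + 1 :=
        Nat.ceil_lt_add_one (Real.exp_pos _).le
      have h2 : (1:ℝ) ≤ Real.exp (Real.exp ((n:ℝ)*RY)) := Real.one_le_exp (Real.exp_pos _).le
      linarith
    have hT1 : Real.exp (-((1 - Real.log 2)/2 * (Kr * p1)))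
        ≤ Real.exp (-((1 - Real.log 2)/2 * Real.exp ((n:ℝ)*RtY))) := by
      apply Real.exp_le_exp.mpr
      have hKp : Real.exp ((n:ℝ)*RtY) ≤ Kr * p1 := by
        have heq : Real.exp ((n:ℝ)*RtY) = Real.exp ((n:ℝ)*Rpool) * p1 := by
          rw [hp1def, ← Real.exp_add]
          ring_nf
        rw [heq]
        exact mul_le_mul_of_nonneg_right hKlb hp10.le
      nlinarith [hc1, hKp]
    have hKub : Kr ≤ Real.exp ((n:ℝ)*Rpool + 1) := by
      have h1 : Kr < Real.exp ((n:ℝ)*Rpool) + 1 := Nat.ceil_lt_add_one (Real.exp_pos _).le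
      have h3 : (1:ℝ) ≤ Real.exp ((n:ℝ)*Rpool) :=
        Real.one_le_exp (mul_nonneg hn0 (by linarith))
      have h2 : Real.exp ((n:ℝ)*Rpool) + 1 ≤ Real.exp ((n:ℝ)*Rpool + 1) := by
        rw [Real.exp_add]
        nlinarith [Real.exp_one_gt_d9]
      linarith
    have hNZlb : Real.exp (Real.exp ((n:ℝ)*RZ)) ≤ (Kmsg RZ n : ℝ) := Nat.le_ceil _
    have hexpD : Real.exp (Real.exp ((n:ℝ)*RZ) - (2+2*Rpool)*(n:ℝ) - 4)
        ≤ (Kmsg RZ n : ℝ) * (ε/Kr)^2 / 4 := by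
      have hεKr : Real.exp ((-(n:ℝ)) - ((n:ℝ)*Rpool + 1)) ≤ ε / Kr := by
        rw [Real.exp_sub]
        have hεeq : Real.exp (-(n:ℝ)) = ε := by
          rw [hεdef]; ring_nf
        rw [hεeq]
        exact div_le_div_of_nonneg_left hε0.le hKr0 hKub
      have hsq : (Real.exp ((-(n:ℝ)) - ((n:ℝ)*Rpool + 1)))^2 ≤ (ε/Kr)^2 :=
        pow_le_pow_left₀ (Real.exp_pos _).le hεKr 2
      have hsqeq : (Real.exp ((-(n:ℝ)) - ((n:ℝ)*Rpool + 1)))^2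
          = Real.exp (((2:ℕ):ℝ) * ((-(n:ℝ)) - ((n:ℝ)*Rpool + 1))) := by
        rw [Real.exp_nat_mul]
      have hmul : Real.exp (Real.exp ((n:ℝ)*RZ)) *
            Real.exp (((2:ℕ):ℝ) * ((-(n:ℝ)) - ((n:ℝ)*Rpool + 1)))
          ≤ (Kmsg RZ n : ℝ) * (ε/Kr)^2 := by
        rw [← hsqeq]
        exact mul_le_mul hNZlb hsq (by positivity) (le_trans (Real.exp_pos _).le hNZlb)
      have hcollect : Real.exp (Real.exp ((n:ℝ)*RZ)) *
            Real.exp (((2:ℕ):ℝ) * ((-(n:ℝ)) - ((n:ℝ)*Rpool + 1)))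
          = Real.exp (Real.exp ((n:ℝ)*RZ) + ((2:ℕ):ℝ) * ((-(n:ℝ)) - ((n:ℝ)*Rpool + 1))) := by
        rw [← Real.exp_add]
      rw [hcollect] at hmul
      have hfour : Real.exp (Real.exp ((n:ℝ)*RZ) - (2+2*Rpool)*(n:ℝ) - 4)
          ≤ Real.exp (Real.exp ((n:ℝ)*RZ) + ((2:ℕ):ℝ) * ((-(n:ℝ)) - ((n:ℝ)*Rpool + 1))) / 4 := by
        have hX : Real.exp ((n:ℝ)*RZ) + ((2:ℕ):ℝ) * ((-(n:ℝ)) - ((n:ℝ)*Rpool + 1))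
            = (Real.exp ((n:ℝ)*RZ) - (2+2*Rpool)*(n:ℝ) - 4) + 2 := by
          push_cast
          ring
        rw [hX, Real.exp_add]
        have he2 : (4:ℝ) ≤ Real.exp 2 := by
          have h2eq : Real.exp 2 = Real.exp 1 * Real.exp 1 := by
            rw [← Real.exp_add]; norm_num
          nlinarith [Real.exp_one_gt_d9]
        have hpos := Real.exp_pos (Real.exp ((n:ℝ)*RZ) - (2+2*Rpool)*(n:ℝ) - 4)
        rw [le_div_iff₀ (by norm_num : (0:ℝ) < 4)]
        nlinarith
      linarith
    have hB2 : 2 * Kr * Real.exp (-((Kmsg RZ n : ℝ) * (ε/Kr)^2 / 4))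
        ≤ 2 * Real.exp ((n:ℝ)*Rpool + 1) *
            Real.exp (-(Real.exp (Real.exp ((n:ℝ)*RZ) - (2+2*Rpool)*(n:ℝ) - 4))) := by
      apply mul_le_mul (by linarith) (Real.exp_le_exp.mpr (by linarith)) (Real.exp_pos _).le
        (by positivity)
    have hfinpos1 : (0:ℝ) ≤ Real.exp (-((1 - Real.log 2)/2 * (Kr * p1)))
        + 2 * Kr * Real.exp (-((Kmsg RZ n : ℝ) * (ε/Kr)^2 / 4)) := by positivity
    calc (Kmsg RY n : ℝ) * (Real.exp (-((1 - Real.log 2)/2 * (Kr * p1)))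
            + 2 * Kr * Real.exp (-((Kmsg RZ n : ℝ) * (ε/Kr)^2 / 4)))
        ≤ (2 * Real.exp (Real.exp ((n:ℝ)*RY))) * (Real.exp (-((1 - Real.log 2)/2 * (Kr * p1)))
            + 2 * Kr * Real.exp (-((Kmsg RZ n : ℝ) * (ε/Kr)^2 / 4))) :=
          mul_le_mul_of_nonneg_right hMY hfinpos1
      _ = 2 * Real.exp (Real.exp ((n:ℝ)*RY)) * Real.exp (-((1 - Real.log 2)/2 * (Kr * p1)))
          + 2 * Real.exp (Real.exp ((n:ℝ)*RY)) *
              (2 * Kr * Real.exp (-((Kmsg RZ n : ℝ) * (ε/Kr)^2 / 4))) := by ring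
      _ ≤ 2 * Real.exp (Real.exp ((n:ℝ)*RY)) *
              Real.exp (-((1 - Real.log 2)/2 * Real.exp ((n:ℝ)*RtY)))
          + 2 * Real.exp (Real.exp ((n:ℝ)*RY)) *
              (2 * Real.exp ((n:ℝ)*Rpool + 1) *
                Real.exp (-(Real.exp (Real.exp ((n:ℝ)*RZ) - (2+2*Rpool)*(n:ℝ) - 4)))) := by
          apply add_le_add
          · exact mul_le_mul_of_nonneg_left hT1 (by positivity)
          · exact mul_le_mul_of_nonneg_left hB2 (by positivity)
      _ = g n := by rw [hgdef]; ring
  · -- g tends to 0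
    have hg1 : Filter.Tendsto (fun n : ℕ =>
        2 * Real.exp (Real.exp ((n:ℝ)*RY)) *
          Real.exp (-((1 - Real.log 2)/2 * Real.exp ((n:ℝ)*RtY))))
        Filter.atTop (nhds 0) := by
      have hA : Filter.Tendsto (fun k : ℕ =>
          Real.exp ((k:ℝ)*RY) + -((1 - Real.log 2)/2 * Real.exp ((k:ℝ)*RtY)))
          Filter.atTop Filter.atBot := by
        have hts : Filter.Tendsto (fun k : ℕ => (k:ℝ)*RtY) Filter.atTop Filter.atTop :=
          tendsto_natCast_atTop_atTop.atTop_mul_const (by linarith)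
        have hE2 : Filter.Tendsto (fun k : ℕ => Real.exp ((k:ℝ)*RtY)) Filter.atTop Filter.atTop :=
          Real.tendsto_exp_atTop.comp hts
        have hquarter : Filter.Tendsto
            (fun k : ℕ => -((1 - Real.log 2)/4 * Real.exp ((k:ℝ)*RtY)))
            Filter.atTop Filter.atBot :=
          Filter.tendsto_neg_atBot_iff.mpr
            (Filter.Tendsto.const_mul_atTop (by linarith) hE2)
        have hsmall : Filter.Tendsto (fun k : ℕ => Real.exp ((k:ℝ)*(RY - RtY)))
            Filter.atTop (nhds 0) := by
          apply Real.tendsto_exp_atBot.comp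
          have h1 : Filter.Tendsto (fun k : ℕ => (k:ℝ)*(RtY - RY)) Filter.atTop Filter.atTop :=
            tendsto_natCast_atTop_atTop.atTop_mul_const (by linarith)
          have h2 := Filter.tendsto_neg_atBot_iff.mpr h1
          exact h2.congr fun k => by ring
        refine Filter.tendsto_atBot_mono' _ ?_ hquarter
        filter_upwards [hsmall.eventually_le_const
          (show (0:ℝ) < (1 - Real.log 2)/4 from by linarith)] with k hk
        have hexp : Real.exp ((k:ℝ)*RY)
            = Real.exp ((k:ℝ)*(RY - RtY)) * Real.exp ((k:ℝ)*RtY) := by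
          rw [← Real.exp_add]; ring_nf
        have hE2pos : (0:ℝ) < Real.exp ((k:ℝ)*RtY) := Real.exp_pos _
        have := mul_le_mul_of_nonneg_right hk hE2pos.le
        nlinarith
      have h := (Real.tendsto_exp_atBot.comp hA).const_mul (2:ℝ)
      rw [mul_zero] at h
      refine h.congr fun k => ?_
      show 2 * Real.exp (Real.exp ((k:ℝ)*RY) + -((1 - Real.log 2)/2 * Real.exp ((k:ℝ)*RtY))) = _
      rw [Real.exp_add]
      ring
    have hg2 : Filter.Tendsto (fun n : ℕ =>
        4 * Real.exp (Real.exp ((n:ℝ)*RY)) * Real.exp ((n:ℝ)*Rpool + 1) *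
          Real.exp (-(Real.exp (Real.exp ((n:ℝ)*RZ) - (2+2*Rpool)*(n:ℝ) - 4))))
        Filter.atTop (nhds 0) := by
      have hA2 : Filter.Tendsto (fun k : ℕ =>
          Real.exp ((k:ℝ)*RY) + ((k:ℝ)*Rpool + 1)
            + -(Real.exp (Real.exp ((k:ℝ)*RZ) - (2+2*Rpool)*(k:ℝ) - 4)))
          Filter.atTop Filter.atBot := by
        have hneg : Filter.Tendsto (fun k : ℕ => -((k:ℝ))) Filter.atTop Filter.atBot :=
          Filter.tendsto_neg_atBot_iff.mpr tendsto_natCast_atTop_atTop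
        refine Filter.tendsto_atBot_mono' _ ?_ hneg
        filter_upwards [BCAux.ev_poly_le_exp RY hY0 2 (Rpool + 2),
          BCAux.ev_poly_le_exp RZ hZ0 (4 + Real.log 2) (RY + 2 + 2*Rpool)] with k hk1 hk2
        have hk0 : (0:ℝ) ≤ (k:ℝ) := Nat.cast_nonneg k
        have hD : (k:ℝ)*RY + Real.log 2
            ≤ Real.exp ((k:ℝ)*RZ) - (2+2*Rpool)*(k:ℝ) - 4 := by nlinarith
        have hDexp : Real.exp ((k:ℝ)*RY + Real.log 2)
            ≤ Real.exp (Real.exp ((k:ℝ)*RZ) - (2+2*Rpool)*(k:ℝ) - 4) :=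
          Real.exp_le_exp.mpr hD
        have hDval : Real.exp ((k:ℝ)*RY + Real.log 2) = 2 * Real.exp ((k:ℝ)*RY) := by
          rw [Real.exp_add, Real.exp_log (by norm_num : (0:ℝ) < 2)]
          ring
        rw [hDval] at hDexp
        nlinarith
      have h := (Real.tendsto_exp_atBot.comp hA2).const_mul (4:ℝ)
      rw [mul_zero] at h
      refine h.congr fun k => ?_
      show 4 * Real.exp (Real.exp ((k:ℝ)*RY) + ((k:ℝ)*Rpool + 1)
          + -(Real.exp (Real.exp ((k:ℝ)*RZ) - (2+2*Rpool)*(k:ℝ) - 4))) = _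
      rw [Real.exp_add, Real.exp_add]
      ring
    have := hg1.add hg2
    rw [add_zero] at this
    exact this.congr fun n => by rw [hgdef]
end
end
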